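/- arXiv:1204.1118 — 6 statements merged into one kernel-verified Lean document; each statement's English description precedes it below -/
import Mathlib

section
/- The subspace ⁅𝔰, 𝔰⁆ of 𝔤 spanned by all brackets ⁅x, y⁆ with x, y ∈ 𝔰 is equal to 𝔨. -/
/-- `⁅𝔰, 𝔰⁆ = 𝔨` for the Cartan decomposition `𝔤 = 𝔨 ⊕ 𝔰` of a complex simple Lie
algebra with respect to a nontrivial involution `θ` (used in the proof of Theorem 2.3). -/
theorem stmt_2
    {L : Type*} [LieRing L] [LieAlgebra ℂ L] [Module.Finite ℂ L]
    [LieAlgebra.IsSimple ℂ L]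
    (θ : L →ₗ⁅ℂ⁆ L) (hθinv : ∀ x, θ (θ x) = x) (hθne : θ ≠ LieHom.id)
    (𝔨 : LieSubalgebra ℂ L) (h𝔨 : ∀ x, x ∈ 𝔨 ↔ θ x = x)
    (𝔰 : Submodule ℂ L) (h𝔰 : ∀ x, x ∈ 𝔰 ↔ θ x = -x) :
    Submodule.span ℂ {z : L | ∃ x ∈ 𝔰, ∃ y ∈ 𝔰, z = ⁅x, y⁆} = 𝔨.toSubmodule := by
  set S : Set L := {z : L | ∃ x ∈ 𝔰, ∃ y ∈ 𝔰, z = ⁅x, y⁆} with hS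
  set m : Submodule ℂ L := Submodule.span ℂ S with hm
  -- m ≤ 𝔨
  have hmk : m ≤ 𝔨.toSubmodule := by
    rw [hm, Submodule.span_le]
    rintro z ⟨x, hx, y, hy, rfl⟩
    rw [SetLike.mem_coe, LieSubalgebra.mem_toSubmodule, h𝔨, LieHom.map_lie,
      (h𝔰 x).mp hx, (h𝔰 y).mp hy, lie_neg, neg_lie, neg_neg]
  -- [𝔨, 𝔰] ⊆ 𝔰
  have hks : ∀ k, θ k = k → ∀ s ∈ 𝔰, ⁅k, s⁆ ∈ 𝔰 := by
    intro k hk s hs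
    rw [h𝔰, LieHom.map_lie, hk, (h𝔰 s).mp hs, lie_neg]
  -- [𝔰, 𝔨] ⊆ 𝔰
  have hsk : ∀ s ∈ 𝔰, ∀ k, θ k = k → ⁅s, k⁆ ∈ 𝔰 := by
    intro s hs k hk
    rw [h𝔰, LieHom.map_lie, hk, (h𝔰 s).mp hs, neg_lie]
  -- [𝔨, m] ⊆ m
  have hkm : ∀ k, θ k = k → ∀ z ∈ m, ⁅k, z⁆ ∈ m := by
    intro k hk z hz
    induction hz using Submodule.span_induction with
    | mem z hz =>
      obtain ⟨x, hx, y, hy, rfl⟩ := hz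
      rw [leibniz_lie]
      exact add_mem (Submodule.subset_span ⟨_, hks k hk x hx, _, hy, rfl⟩)
        (Submodule.subset_span ⟨_, hx, _, hks k hk y hy, rfl⟩)
    | zero => simp
    | add a b _ _ ha hb => rw [lie_add]; exact add_mem ha hb
    | smul c a _ ha => rw [lie_smul]; exact Submodule.smul_mem _ _ ha
  -- decomposition of any element
  have hdec : ∀ x : L, ∃ k s : L, θ k = k ∧ s ∈ 𝔰 ∧ x = k + s := by
    intro x
    refine ⟨(2:ℂ)⁻¹ • (x + θ x), (2:ℂ)⁻¹ • (x - θ x), ?_, ?_, ?_⟩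
    · rw [map_smul θ, map_add θ, hθinv, add_comm]
    · rw [h𝔰, map_smul θ, map_sub θ, hθinv, ← neg_sub, smul_neg]
    · have h2 : (x + θ x) + (x - θ x) = (2:ℂ) • x := by rw [two_smul]; abel
      rw [← smul_add, h2, smul_smul]; norm_num
  -- the ideal I = m ⊔ 𝔰
  let I : LieIdeal ℂ L :=
    { toSubmodule := m ⊔ 𝔰
      lie_mem := by
        intro x a ha
        have ha' : a ∈ m ⊔ 𝔰 := ha
        rw [Submodule.mem_sup] at ha'
        obtain ⟨b, hb, t, ht, rfl⟩ := ha'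
        obtain ⟨k, s, hk, hs, rfl⟩ := hdec x
        have hbk : θ b = b := (h𝔨 b).mp (hmk hb)
        have h1 : ⁅k, b⁆ ∈ m := hkm k hk b hb
        have h2 : ⁅k, t⁆ ∈ 𝔰 := hks k hk t ht
        have h3 : ⁅s, b⁆ ∈ 𝔰 := by
          rw [h𝔰, LieHom.map_lie, hbk, (h𝔰 s).mp hs, neg_lie]
        have h4 : ⁅s, t⁆ ∈ m := Submodule.subset_span ⟨_, hs, _, ht, rfl⟩
        show ⁅k + s, b + t⁆ ∈ m ⊔ 𝔰
        rw [add_lie, lie_add, lie_add]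
        refine add_mem (add_mem ?_ ?_) (add_mem ?_ ?_)
        · exact Submodule.mem_sup_left h1
        · exact Submodule.mem_sup_right h2
        · exact Submodule.mem_sup_right h3
        · exact Submodule.mem_sup_left h4 }
  -- I ≠ ⊥ : 𝔰 ≠ 0
  have hIne : I ≠ ⊥ := by
    intro hbot
    apply hθne
    ext x
    obtain ⟨k, s, hk, hs, rfl⟩ := hdec x
    have hsI : s ∈ I := Submodule.mem_sup_right hs
    rw [hbot, LieSubmodule.mem_bot] at hsI
    simp [hsI, hk]
  have hItop : I = ⊤ := (LieAlgebra.IsSimple.eq_bot_or_eq_top I).resolve_left hIne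
  -- conclude
  refine le_antisymm hmk ?_
  intro k hk
  have hkI : k ∈ I := by rw [hItop]; trivial
  have : k ∈ m ⊔ 𝔰 := hkI
  rw [Submodule.mem_sup] at this
  obtain ⟨b, hb, t, ht, rfl⟩ := this
  have hbk : θ b = b := (h𝔨 b).mp (hmk hb)
  have hkk : θ (b + t) = b + t := (h𝔨 _).mp hk
  have ht0 : t = 0 := by
    have hθt : θ t = -t := (h𝔰 t).mp ht
    have hne : -t = t := by
      have := hkk
      rw [map_add θ, hbk, hθt] at this
      exact add_left_cancel this
    have htt : t + t = 0 := by nth_rw 1 [← hne]; exact neg_add_cancel t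
    have h2 : (2:ℂ) • t = 0 := by rw [two_smul]; exact htt
    have := smul_eq_zero.mp h2
    simpa using this
  rw [ht0, add_zero]
  exact hb
end

section
/- Let V be a finite-dimensional vector space over ℂ, θ : V → V a linear involution (θ ∘ θ = id), and V₊ = ker(θ − id), V₋ = ker(θ + id) its eigenspaces. Suppose W₁ and W₂ are θ-invariant subspaces of V with W₁ + W₂ = V and W₁ ∩ W₂ ⊆ V₊. Then V₋ is the (internal) direct sum of V₋ ∩ W₁ and V₋ ∩ W₂, i.e., V₋ = (V₋ ∩ W₁) + (V₋ ∩ W₂) and (V₋ ∩ W₁) ∩ (V₋ ∩ W₂) = 0. -/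
/-- The linear-algebra step in the proof of Theorem 2.3: if `θ` is a linear involution
of a finite-dimensional complex vector space and `W₁, W₂` are `θ`-invariant subspaces
with `W₁ + W₂ = V` and `W₁ ∩ W₂ ⊆ V₊`, then the `(−1)`-eigenspace `V₋` decomposes as
the direct sum of `V₋ ∩ W₁` and `V₋ ∩ W₂`. -/
theorem stmt_3
    {V : Type*} [AddCommGroup V] [Module ℂ V] [FiniteDimensional ℂ V]
    (θ : V →ₗ[ℂ] V) (hθinv : ∀ x, θ (θ x) = x)
    (Vplus Vminus : Submodule ℂ V)
    (hVplus : ∀ x, x ∈ Vplus ↔ θ x = x)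
    (hVminus : ∀ x, x ∈ Vminus ↔ θ x = -x)
    (W₁ W₂ : Submodule ℂ V)
    (hW₁ : ∀ x ∈ W₁, θ x ∈ W₁) (hW₂ : ∀ x ∈ W₂, θ x ∈ W₂)
    (hsum : W₁ ⊔ W₂ = ⊤) (hcap : W₁ ⊓ W₂ ≤ Vplus) :
    (Vminus ⊓ W₁) ⊔ (Vminus ⊓ W₂) = Vminus ∧ (Vminus ⊓ W₁) ⊓ (Vminus ⊓ W₂) = ⊥ := by
  constructor
  · apply le_antisymm
    · exact sup_le inf_le_left inf_le_left
    · intro x hx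
      have hθx : θ x = -x := (hVminus x).mp hx
      -- write x = w₁ + w₂
      have : x ∈ W₁ ⊔ W₂ := by rw [hsum]; trivial
      obtain ⟨w₁, hw₁, w₂, hw₂, hsumx⟩ := Submodule.mem_sup.mp this
      set v₁ : V := (2⁻¹ : ℂ) • (w₁ - θ w₁) with hv₁
      set v₂ : V := (2⁻¹ : ℂ) • (w₂ - θ w₂) with hv₂
      have hv₁W : v₁ ∈ W₁ := W₁.smul_mem _ (W₁.sub_mem hw₁ (hW₁ w₁ hw₁))
      have hv₂W : v₂ ∈ W₂ := W₂.smul_mem _ (W₂.sub_mem hw₂ (hW₂ w₂ hw₂))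
      have hv₁m : v₁ ∈ Vminus := by
        rw [hVminus]
        simp only [hv₁, map_smul, map_sub, hθinv]
        rw [← smul_neg, neg_sub]
      have hv₂m : v₂ ∈ Vminus := by
        rw [hVminus]
        simp only [hv₂, map_smul, map_sub, hθinv]
        rw [← smul_neg, neg_sub]
      have hxeq : x = v₁ + v₂ := by
        have : v₁ + v₂ = (2⁻¹ : ℂ) • (x - θ x) := by
          rw [hv₁, hv₂, ← smul_add, ← hsumx, map_add]; congr 1; abel
        rw [this, hθx, sub_neg_eq_add]
        rw [← two_smul ℂ x, smul_smul]
        norm_num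
      rw [hxeq]
      exact Submodule.add_mem_sup ⟨hv₁m, hv₁W⟩ ⟨hv₂m, hv₂W⟩
  · rw [eq_bot_iff]
    intro x hx
    simp only [Submodule.mem_inf] at hx
    obtain ⟨⟨hxm, hx₁⟩, _, hx₂⟩ := hx
    have hp : θ x = x := (hVplus x).mp (hcap (Submodule.mem_inf.mpr ⟨hx₁, hx₂⟩))
    have hm : θ x = -x := (hVminus x).mp hxm
    rw [hp] at hm
    have h2 : (2 : ℂ) • x = 0 := by
      rw [two_smul]; nth_rewrite 1 [hm]; abel
    simpa using (smul_eq_zero.mp h2).resolve_left (by norm_num)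
end

section
/- Let 𝔭 be a Lie subalgebra of 𝔤 with 𝔰 ⊆ 𝔭. Then 𝔭 = 𝔤. -/
/-- A step in the proof of Theorem 2.3: in a complex simple Lie algebra with
Cartan decomposition `𝔤 = 𝔨 ⊕ 𝔰`, any Lie subalgebra containing `𝔰` equals `𝔤`. -/
theorem stmt_5
    {L : Type*} [LieRing L] [LieAlgebra ℂ L] [Module.Finite ℂ L]
    [LieAlgebra.IsSimple ℂ L]
    (θ : L →ₗ⁅ℂ⁆ L) (hθinv : ∀ x, θ (θ x) = x) (hθne : θ ≠ LieHom.id)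
    (𝔨 : LieSubalgebra ℂ L) (h𝔨 : ∀ x, x ∈ 𝔨 ↔ θ x = x)
    (𝔰 : Submodule ℂ L) (h𝔰 : ∀ x, x ∈ 𝔰 ↔ θ x = -x)
    (𝔭 : LieSubalgebra ℂ L) (h𝔭 : 𝔰 ≤ 𝔭.toSubmodule) :
    𝔭 = ⊤ := by
  classical
  -- generators of [𝔰, 𝔰]
  set G : Set L := {z | ∃ x ∈ 𝔰, ∃ y ∈ 𝔰, ⁅x, y⁆ = z} with hG
  set D : Submodule ℂ L := Submodule.span ℂ G with hD
  set T : Submodule ℂ L := 𝔰 ⊔ D with hT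
  -- every element of D is θ-fixed
  have hDfix : ∀ d ∈ D, θ d = d := by
    intro d hd
    have : D ≤ LinearMap.ker ((θ : L →ₗ[ℂ] L) - LinearMap.id) := by
      rw [hD, Submodule.span_le]
      rintro z ⟨x, hx, y, hy, rfl⟩
      simp only [SetLike.mem_coe, LinearMap.mem_ker, LinearMap.sub_apply,
        LinearMap.id_apply, LieHom.coe_toLinearMap]
      rw [LieHom.map_lie, (h𝔰 x).mp hx, (h𝔰 y).mp hy]
      simp
    have := this hd
    simpa [sub_eq_zero] using this
  -- bracket of an 𝔰-element with a θ-fixed element lies in 𝔰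
  have hsk : ∀ s d : L, θ s = -s → θ d = d → ⁅s, d⁆ ∈ 𝔰 := by
    intro s d hs hd
    rw [h𝔰, LieHom.map_lie, hs, hd, neg_lie]
  -- bracket of a θ-fixed element with D lies in D
  have hkD : ∀ k : L, θ k = k → ∀ d ∈ D, ⁅k, d⁆ ∈ D := by
    intro k hk d hd
    induction hd using Submodule.span_induction with
    | mem z hz =>
      obtain ⟨x, hx, y, hy, rfl⟩ := hz
      rw [leibniz_lie]
      refine add_mem (Submodule.subset_span ?_) (Submodule.subset_span ?_)
      · exact ⟨⁅k, x⁆, by rw [h𝔰, LieHom.map_lie, hk, (h𝔰 x).mp hx, lie_neg], y, hy, rfl⟩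
      · exact ⟨x, hx, ⁅k, y⁆, by rw [h𝔰, LieHom.map_lie, hk, (h𝔰 y).mp hy, lie_neg], rfl⟩
    | zero => simp
    | add a b _ _ ha hb => rw [lie_add]; exact add_mem ha hb
    | smul c a _ ha => rw [lie_smul]; exact Submodule.smul_mem _ _ ha
  -- T is a Lie ideal
  have key : ∀ (a : L) {t : L}, t ∈ T → ⁅a, t⁆ ∈ T := by
    intro a t ht
    obtain ⟨u, hu, d, hd, rfl⟩ := Submodule.mem_sup.mp ht
    set k : L := (1/2 : ℂ) • (a + θ a) with hk
    set s : L := (1/2 : ℂ) • (a - θ a) with hs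
    have hks : a = k + s := by rw [hk, hs]; rw [← smul_add]; ring_nf; module
    have hθk : θ k = k := by rw [hk]; simp [map_add, hθinv a, add_comm]
    have hθs : θ s = -s := by rw [hs]; simp [map_sub, hθinv a]; module
    rw [hks, lie_add, add_lie, add_lie]
    have h1 : ⁅k, u⁆ ∈ 𝔰 := by
      rw [h𝔰, LieHom.map_lie, hθk, (h𝔰 u).mp hu, lie_neg]
    have h2 : ⁅s, u⁆ ∈ D := Submodule.subset_span ⟨s, (h𝔰 s).mpr hθs, u, hu, rfl⟩
    have h3 : ⁅k, d⁆ ∈ D := hkD k hθk d hd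
    have h4 : ⁅s, d⁆ ∈ 𝔰 := hsk s d hθs (hDfix d hd)
    exact add_mem (add_mem (Submodule.mem_sup_left h1) (Submodule.mem_sup_right h2))
      (add_mem (Submodule.mem_sup_right h3) (Submodule.mem_sup_left h4))
  let I : LieIdeal ℂ L := { T with lie_mem := fun {x m} hm => key x hm }
  -- T is nonzero because 𝔰 ≠ 0 (since θ ≠ id)
  have hIne : I ≠ ⊥ := by
    intro hbot
    apply hθne
    ext x
    have hx : x - θ x ∈ 𝔰 := by
      rw [h𝔰]
      have h := LinearMap.map_sub (θ.toLinearMap) x (θ x)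
      simp only [LieHom.coe_toLinearMap] at h
      rw [h, hθinv x]; abel
    have hxT : x - θ x ∈ I := Submodule.mem_sup_left hx
    rw [hbot] at hxT
    have h0 : x - θ x = 0 := by simpa using hxT
    have hx0 : x = θ x := sub_eq_zero.mp h0
    rw [LieHom.id_apply, ← hx0]
  have hItop : I = ⊤ := (LieAlgebra.IsSimple.eq_bot_or_eq_top I).resolve_left hIne
  -- T ≤ 𝔭
  have hTp : T ≤ 𝔭.toSubmodule := by
    rw [hT, sup_le_iff]
    refine ⟨h𝔭, ?_⟩
    rw [hD, Submodule.span_le]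
    rintro z ⟨x, hx, y, hy, rfl⟩
    exact 𝔭.lie_mem (h𝔭 hx) (h𝔭 hy)
  have : (⊤ : Submodule ℂ L) ≤ 𝔭.toSubmodule := by
    intro x _
    have hxI : x ∈ I := by rw [hItop]; trivial
    exact hTp hxI
  ext x
  simp only [LieSubalgebra.mem_top, iff_true]
  exact this trivial
end

section
/- No Borel subalgebra (maximal solvable Lie subalgebra) of 𝔤 is contained in 𝔨. Equivalently, if 𝔟 is a solvable Lie subalgebra of 𝔤 contained in 𝔨, then 𝔟 is not maximal among the solvable Lie subalgebras of 𝔤. -/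
open Module LinearMap Submodule

section LieTheoremAux

variable {L : Type*} [LieRing L] [LieAlgebra ℂ L]
variable {M : Type*} [AddCommGroup M] [Module ℂ M] [LieRingModule L M] [LieModule ℂ L M]
variable [FiniteDimensional ℂ M]

attribute [local instance] LieRing.ofAssociativeRing

theorem chi_vanish (I : LieSubalgebra ℂ L) (hI : ∀ (x : L) (b : L), b ∈ I → ⁅x, b⁆ ∈ I)
    (χ : ↥I → ℂ) (w₀ : M) (hw₀ : w₀ ≠ 0) (hw : ∀ a : ↥I, ⁅(a : L), w₀⁆ = χ a • w₀)
    (z : L) (a : ↥I) (h : ⁅(a : L), z⁆ ∈ I) : χ ⟨⁅(a : L), z⁆, h⟩ = 0 := by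
  classical
  set f := LieModule.toEnd ℂ L M z with hf
  set u : ℕ → M := fun k => (f ^ k) w₀ with hu
  set U : ℕ → Submodule ℂ M := fun j => Submodule.span ℂ (u '' Set.Iio j) with hU
  have hUmono : ∀ {i j : ℕ}, i ≤ j → U i ≤ U j := fun hij =>
    Submodule.span_mono (Set.image_mono (Set.Iio_subset_Iio hij))
  have humem : ∀ {i j : ℕ}, i < j → u i ∈ U j := fun hij =>
    Submodule.subset_span ⟨_, hij, rfl⟩
  have hu0 : u 0 = w₀ := by simp [hu]
  have hu_succ : ∀ k, u (k + 1) = f (u k) := by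
    intro k
    simp [hu, pow_succ']
  have key : ∀ (k : ℕ) (b : ↥I), ⁅(b : L), u k⁆ - χ b • u k ∈ U k := by
    intro k
    induction k with
    | zero =>
      intro b
      rw [hu0, hw b, sub_self]
      exact Submodule.zero_mem _
    | succ k ih =>
      intro b
      have hbz : ⁅(b : L), z⁆ ∈ I := by
        have := hI z (b : L) b.2
        have h2 : (⁅(b : L), z⁆ : L) = -⁅z, (b : L)⁆ := (lie_skew _ _).symm
        rw [h2]; exact neg_mem this
      set b' : ↥I := ⟨⁅(b : L), z⁆, hbz⟩ with hb'
      have e1 : ⁅(b : L), u (k + 1)⁆ = ⁅(b' : L), u k⁆ + ⁅z, ⁅(b : L), u k⁆⁆ := by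
        rw [hu_succ k]
        have : f (u k) = ⁅z, u k⁆ := by simp [hf]
        rw [this, leibniz_lie]
      have hd : ⁅(b : L), u k⁆ - χ b • u k ∈ U k := ih b
      have hd' : ⁅(b' : L), u k⁆ - χ b' • u k ∈ U k := ih b'
      have e2 : ⁅(b : L), u (k + 1)⁆ - χ b • u (k + 1)
          = (⁅(b' : L), u k⁆ - χ b' • u k) + χ b' • u k
            + ⁅z, ⁅(b : L), u k⁆ - χ b • u k⁆ := by
        rw [e1, hu_succ k]
        have : f (u k) = ⁅z, u k⁆ := by simp [hf]
        rw [this, lie_sub, lie_smul]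
        abel
      rw [e2]
      have hfUk : ∀ x ∈ U k, ⁅z, x⁆ ∈ U (k + 1) := by
        intro x hx
        have hmap : Submodule.map (f : M →ₗ[ℂ] M) (U k) ≤ U (k + 1) := by
          rw [hU, Submodule.map_span]
          apply Submodule.span_le.mpr
          rintro _ ⟨_, ⟨i, hi, rfl⟩, rfl⟩
          have : f (u i) = u (i + 1) := (hu_succ i).symm
          rw [this]
          exact humem (Nat.succ_lt_succ hi)
        have : ⁅z, x⁆ = f x := by simp [hf]
        rw [this]
        exact hmap ⟨x, hx, rfl⟩
      refine Submodule.add_mem _ (Submodule.add_mem _ (hUmono k.le_succ hd') ?_) (hfUk _ hd)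
      exact Submodule.smul_mem _ _ (humem k.lt_succ_self)
  have hex : ∃ N, u N ∈ U N := by
    by_contra hcon
    push_neg at hcon
    have hlt : ∀ N, U N < U (N + 1) := fun N =>
      lt_of_le_of_ne (hUmono N.le_succ)
        (fun he => hcon N (by rw [he]; exact humem N.lt_succ_self))
    have hrank : ∀ N, N ≤ finrank ℂ (U N) := by
      intro N
      induction N with
      | zero => exact Nat.zero_le _
      | succ N ih =>
        exact Nat.succ_le_of_lt
          (lt_of_le_of_lt ih (Submodule.finrank_lt_finrank_of_lt (hlt N)))
    have h1 := hrank (finrank ℂ M + 1)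
    have h2 : finrank ℂ (U (finrank ℂ M + 1)) ≤ finrank ℂ M := Submodule.finrank_le _
    omega
  set N := Nat.find hex with hNdef
  have hNmem : u N ∈ U N := Nat.find_spec hex
  have hNmin : ∀ m, m < N → u m ∉ U m := fun m hm => Nat.find_min hex hm
  have hN0 : 0 < N := by
    rcases Nat.eq_zero_or_pos N with h0 | hpos
    · exfalso
      have : u 0 ∈ U 0 := h0 ▸ hNmem
      have hempty : u '' Set.Iio (0 : ℕ) = ∅ := by
        simp [Set.Iio, Nat.not_lt_zero]
      rw [hU] at this
      simp only [hempty, Submodule.span_empty, Submodule.mem_bot] at this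
      exact hw₀ (hu0 ▸ this)
    · exact hpos
  -- every u j for j ≤ N lies in U N
  have huN : ∀ j, j ≤ N → u j ∈ U N := fun j hj =>
    hj.lt_or_eq.elim (fun hlt' => humem hlt') (fun heq => heq ▸ hNmem)
  -- stability of U N under the action of elements of I
  have hbU : ∀ (b : ↥I), ∀ x ∈ U N, ⁅(b : L), x⁆ ∈ U N := by
    intro b x hx
    induction hx using Submodule.span_induction with
    | mem x hxs =>
      obtain ⟨i, hi, rfl⟩ := hxs
      have h1 : ⁅(b : L), u i⁆ = χ b • u i + (⁅(b : L), u i⁆ - χ b • u i) := by abel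
      rw [h1]
      exact Submodule.add_mem _ (Submodule.smul_mem _ _ (humem hi))
        (hUmono (le_of_lt hi) (key i b))
    | zero => simp
    | add x y hx' hy' ihx ihy => rw [lie_add]; exact Submodule.add_mem _ ihx ihy
    | smul t x hx' ihx => rw [lie_smul]; exact Submodule.smul_mem _ _ ihx
  -- stability of U N under f
  have hfU : ∀ x ∈ U N, f x ∈ U N := by
    intro x hx
    have hmap : Submodule.map (f : M →ₗ[ℂ] M) (U N) ≤ U N := by
      rw [hU, Submodule.map_span]
      apply Submodule.span_le.mpr
      rintro _ ⟨_, ⟨i, hi, rfl⟩, rfl⟩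
      have : f (u i) = u (i + 1) := (hu_succ i).symm
      rw [this]
      exact huN (i + 1) (Nat.succ_le_of_lt hi)
    exact hmap ⟨x, hx, rfl⟩
  -- linear independence
  have hrange : ∀ k : ℕ, Set.range (fun i : Fin k => u i) = u '' Set.Iio k := by
    intro k
    ext x
    constructor
    · rintro ⟨i, rfl⟩; exact ⟨i, i.isLt, rfl⟩
    · rintro ⟨i, hi, rfl⟩; exact ⟨⟨i, hi⟩, rfl⟩
  have hli : ∀ k, k ≤ N → LinearIndependent ℂ (fun i : Fin k => u i) := by
    intro k
    induction k with
    | zero => intro _; exact linearIndependent_empty_type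
    | succ k ih =>
      intro hk
      have h1 := ih (Nat.le_of_succ_le hk)
      have hnot : u k ∉ Submodule.span ℂ (Set.range fun i : Fin k => u i) := by
        rw [hrange k]
        exact hNmin k (Nat.lt_of_succ_le hk)
      have h2 := linearIndependent_fin_snoc.mpr ⟨h1, hnot⟩
      have h3 : (fun i : Fin (k + 1) => u i) = Fin.snoc (fun i : Fin k => u i) (u k) := by
        funext i
        refine Fin.lastCases ?_ (fun j => ?_) i
        · simp [Fin.snoc_last]
        · simp [Fin.snoc_castSucc]
      rw [h3]
      exact h2
  have hspan : Submodule.span ℂ (Set.range fun i : Fin N => u i) = U N := by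
    rw [hrange N, hU]
  let e : Basis (Fin N) ℂ ↥(U N) :=
    (Basis.span (hli N le_rfl)).map (LinearEquiv.ofEq _ _ hspan)
  have he : ∀ i : Fin N, (e i : M) = u i := by
    intro i
    simp [e, Basis.span_apply]
  -- the three endomorphisms
  set A := LieModule.toEnd ℂ L M (a : L) with hA
  set C := LieModule.toEnd ℂ L M ⁅(a : L), z⁆ with hC
  have hAst : ∀ x ∈ U N, A x ∈ U N := by
    intro x hx
    have : A x = ⁅(a : L), x⁆ := by simp [hA]
    rw [this]; exact hbU a x hx
  have hCst : ∀ x ∈ U N, C x ∈ U N := by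
    intro x hx
    have : C x = ⁅((⟨⁅(a : L), z⁆, h⟩ : ↥I) : L), x⁆ := by simp [hC]
    rw [this]; exact hbU ⟨⁅(a : L), z⁆, h⟩ x hx
  have hCcomm : C = A * f - f * A := by
    have h1 : C = ⁅A, f⁆ := LieHom.map_lie (LieModule.toEnd ℂ L M) (a : L) z
    rw [h1, Ring.lie_def]
  have hres : C.restrict hCst
      = A.restrict hAst * f.restrict hfU - f.restrict hfU * A.restrict hAst := by
    ext x
    simp only [LinearMap.restrict_coe_apply, hCcomm, LinearMap.sub_apply, Module.End.mul_apply,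
      AddSubgroupClass.coe_sub]
  have htr0 : LinearMap.trace ℂ _ (C.restrict hCst) = 0 := by
    rw [hres, map_sub, LinearMap.trace_mul_comm, sub_self]
  set c0 := χ ⟨⁅(a : L), z⁆, h⟩ with hc0
  have hdiag : ∀ j : Fin N, (LinearMap.toMatrix e e (C.restrict hCst)) j j = c0 := by
    intro j
    rw [LinearMap.toMatrix_apply]
    set d : M := ⁅⁅(a : L), z⁆, u j⁆ - c0 • u j with hd
    have hdUj : d ∈ U (j : ℕ) := key j ⟨⁅(a : L), z⁆, h⟩
    have hdUN : d ∈ U N := hUmono (le_of_lt j.isLt) hdUj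
    have heq : C.restrict hCst (e j) = c0 • e j + ⟨d, hdUN⟩ := by
      apply Subtype.ext
      simp only [LinearMap.restrict_coe_apply, Submodule.coe_add, SetLike.val_smul, he j]
      have h2 : C (u j) = ⁅⁅(a : L), z⁆, u j⁆ := by simp [hC]
      rw [h2, hd]
      abel
    rw [heq, map_add, map_smul, Finsupp.add_apply, Finsupp.smul_apply, Basis.repr_self,
      Finsupp.single_eq_same, smul_eq_mul, mul_one]
    have hmem : (⟨d, hdUN⟩ : ↥(U N)) ∈
        Submodule.span ℂ (e '' {i : Fin N | (i : ℕ) < (j : ℕ)}) := by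
      have himg : (U N).subtype '' (e '' {i : Fin N | (i : ℕ) < (j : ℕ)})
          = u '' Set.Iio (j : ℕ) := by
        ext x
        constructor
        · rintro ⟨_, ⟨i, hi, rfl⟩, rfl⟩
          exact ⟨i, hi, (he i).symm⟩
        · rintro ⟨i, hi, rfl⟩
          have hiN : i < N := lt_trans hi j.isLt
          exact ⟨e ⟨i, hiN⟩, ⟨⟨i, hiN⟩, hi, rfl⟩, he ⟨i, hiN⟩⟩
      have hmap : Submodule.map (U N).subtype
          (Submodule.span ℂ (e '' {i : Fin N | (i : ℕ) < (j : ℕ)})) = U (j : ℕ) := by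
        rw [Submodule.map_span, himg, hU]
      rw [← hmap] at hdUj
      obtain ⟨y, hy, hval⟩ := hdUj
      have : y = (⟨d, hdUN⟩ : ↥(U N)) := Subtype.ext hval
      rwa [← this]
    have hsupp := Basis.repr_support_subset_of_mem_span e _ hmem
    have hzero : e.repr ⟨d, hdUN⟩ j = 0 := by
      by_contra hne
      exact absurd (hsupp (Finsupp.mem_support_iff.mpr hne)) (lt_irrefl (j : ℕ))
    rw [hzero, add_zero]
  have htrN : LinearMap.trace ℂ _ (C.restrict hCst) = (N : ℂ) * c0 := by
    rw [LinearMap.trace_eq_matrix_trace ℂ e, Matrix.trace]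
    simp only [Matrix.diag_apply, hdiag, Finset.sum_const, Finset.card_univ, Fintype.card_fin,
      nsmul_eq_mul]
  have hfin : (N : ℂ) * c0 = 0 := by rw [← htrN, htr0]
  have hNne : (N : ℂ) ≠ 0 := Nat.cast_ne_zero.mpr (Nat.pos_iff_ne_zero.mp hN0)
  exact (mul_eq_zero.mp hfin).resolve_left hNne

end LieTheoremAux

section LieThm

universe u v

theorem lie_thm_aux : ∀ (n : ℕ) (L : Type u) [LieRing L] [LieAlgebra ℂ L]
    [FiniteDimensional ℂ L] [LieAlgebra.IsSolvable L]
    (M : Type v) [AddCommGroup M] [Module ℂ M] [LieRingModule L M] [LieModule ℂ L M]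
    [FiniteDimensional ℂ M] [Nontrivial M],
    finrank ℂ L ≤ n → ∃ (χ : L → ℂ) (v : M), v ≠ 0 ∧ ∀ x : L, ⁅x, v⁆ = χ x • v := by
  intro n
  induction n with
  | zero =>
    intro L _ _ _ _ M _ _ _ _ _ _ hn
    obtain ⟨v, hv⟩ := exists_ne (0 : M)
    refine ⟨0, v, hv, fun x => ?_⟩
    have hsub : Subsingleton L := finrank_zero_iff.mp (Nat.le_zero.mp hn)
    have hx : x = 0 := Subsingleton.elim x 0
    rw [hx, zero_lie, Pi.zero_apply, zero_smul]
  | succ n ih =>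
    intro L _ _ _ _ M _ _ _ _ _ _ hn
    by_cases hle : finrank ℂ L ≤ n
    · exact ih L M hle
    have hLnt : Nontrivial L := by
      rw [← Module.finrank_pos_iff (R := ℂ)]; omega
    have hDlt := LieAlgebra.derivedSeries_lt_top_of_solvable ℂ L
    set DS : Submodule ℂ L := (LieAlgebra.derivedSeries ℂ L 1).toSubmodule with hDS
    have hDSne : DS ≠ ⊤ := by
      intro hD
      exact hDlt.ne ((LieSubmodule.toSubmodule_eq_top (N := _)).mp hD)
    -- a functional vanishing on the derived subalgebra
    have hQ : Nontrivial (L ⧸ DS) := (Submodule.Quotient.nontrivial_iff (p := DS)).mpr hDSne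
    obtain ⟨q, hq⟩ := exists_ne (0 : L ⧸ DS)
    obtain ⟨ψ, hψ⟩ : ∃ ψ : Module.Dual ℂ (L ⧸ DS), ψ q ≠ 0 := by
      by_contra hcon
      push_neg at hcon
      exact hq ((Module.forall_dual_apply_eq_zero_iff ℂ q).mp hcon)
    obtain ⟨z, hzq⟩ := Submodule.mkQ_surjective DS q
    set φ : Module.Dual ℂ L := ψ.comp DS.mkQ with hφ
    have hz : φ z ≠ 0 := by
      rw [hφ]; simpa [hzq] using hψ
    have hker : ∀ x y : L, ⁅x, y⁆ ∈ LinearMap.ker φ := by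
      intro x y
      have h1 : ⁅x, y⁆ ∈ DS := LieSubmodule.lie_mem_lie (LieSubmodule.mem_top x) (LieSubmodule.mem_top y)
      simp only [hφ, LinearMap.mem_ker, LinearMap.comp_apply]
      rw [show DS.mkQ ⁅x, y⁆ = 0 from (Submodule.Quotient.mk_eq_zero DS).mpr h1, map_zero]
    set Isub : LieSubalgebra ℂ L :=
      { LinearMap.ker φ with lie_mem' := fun {x y} _ _ => hker x y } with hIsub
    have hImem : ∀ x : L, x ∈ Isub ↔ φ x = 0 := fun x => Iff.rfl
    have hIdeal : ∀ (x b : L), b ∈ Isub → ⁅x, b⁆ ∈ Isub := fun x b _ => hker x b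
    -- finrank of the kernel
    have hφsurj : Function.Surjective φ := by
      intro c
      exact ⟨(c / φ z) • z, by rw [map_smul, smul_eq_mul]; field_simp⟩
    have hkerrank : finrank ℂ ↥Isub ≤ n := by
      have h1 := LinearMap.finrank_range_add_finrank_ker φ
      rw [LinearMap.range_eq_top.mpr hφsurj, finrank_top, Module.finrank_self] at h1
      have : finrank ℂ ↥Isub = finrank ℂ (LinearMap.ker φ) := rfl
      omega
    have hIsolv : LieAlgebra.IsSolvable ↥Isub :=
      Function.Injective.lieAlgebra_isSolvable (f := Isub.incl) Subtype.coe_injective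
    obtain ⟨χ₀, w₀, hw₀ne, hw₀⟩ := ih ↥Isub M hkerrank
    have hw₀' : ∀ b : ↥Isub, ⁅(b : L), w₀⁆ = χ₀ b • w₀ := by
      intro b
      rw [← LieSubalgebra.coe_bracket_of_module]
      exact hw₀ b
    -- the weight space W
    set W : Submodule ℂ M :=
      { carrier := { m | ∀ b : ↥Isub, ⁅(b : L), m⁆ = χ₀ b • m }
        add_mem' := fun {x y} hx hy b => by rw [lie_add, hx b, hy b, smul_add]
        zero_mem' := fun b => by rw [lie_zero, smul_zero]
        smul_mem' := fun t x hx b => by rw [lie_smul, hx b, smul_comm] } with hW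
    have hw₀W : w₀ ∈ W := hw₀'
    -- W is stable under all of L
    have hWst : ∀ (y : L), ∀ m ∈ W, ⁅y, m⁆ ∈ W := by
      intro y m hm b
      have hbz : ⁅(b : L), y⁆ ∈ Isub := by
        rw [show ⁅(b : L), y⁆ = -⁅y, (b : L)⁆ from (lie_skew _ _).symm]
        exact neg_mem (hIdeal y (b : L) b.2)
      have hvan : χ₀ ⟨⁅(b : L), y⁆, hbz⟩ = 0 :=
        chi_vanish Isub hIdeal χ₀ w₀ hw₀ne hw₀' y b hbz
      have h1 : ⁅(b : L), ⁅y, m⁆⁆ = ⁅⁅(b : L), y⁆, m⁆ + ⁅y, ⁅(b : L), m⁆⁆ := leibniz_lie _ _ _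
      have h2 : ⁅⁅(b : L), y⁆, m⁆ = 0 := by
        have := hm ⟨⁅(b : L), y⁆, hbz⟩
        rw [hvan, zero_smul] at this
        exact this
      rw [h1, h2, zero_add, hm b, lie_smul]
    -- eigenvector for the action of z on W
    have hWnt : Nontrivial ↥W := nontrivial_of_ne ⟨w₀, hw₀W⟩ 0
      (fun hc => hw₀ne (by simpa using congrArg Subtype.val hc))
    set g : Module.End ℂ ↥W := (LieModule.toEnd ℂ L M z).restrict
      (fun m hm => hWst z m hm) with hg
    obtain ⟨μ, hμ⟩ := Module.End.exists_eigenvalue g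
    obtain ⟨v, hv⟩ := hμ.exists_hasEigenvector
    have hvne : (v : M) ≠ 0 := fun hc => hv.right (Subtype.ext hc)
    have hgv : ⁅z, (v : M)⁆ = μ • (v : M) := by
      have h1 := hv.apply_eq_smul
      have h2 := congrArg Subtype.val h1
      exact h2
    have hmemI : ∀ x : L, x - (φ x / φ z) • z ∈ Isub := by
      intro x
      rw [hImem, map_sub, map_smul, smul_eq_mul]
      field_simp
      simp
    refine ⟨fun x => χ₀ ⟨x - (φ x / φ z) • z, hmemI x⟩ + (φ x / φ z) * μ, (v : M), hvne, ?_⟩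
    intro x
    have hdec : x = (x - (φ x / φ z) • z) + (φ x / φ z) • z := by abel
    calc ⁅x, (v : M)⁆ = ⁅(x - (φ x / φ z) • z) + (φ x / φ z) • z, (v : M)⁆ := by rw [← hdec]
      _ = ⁅x - (φ x / φ z) • z, (v : M)⁆ + (φ x / φ z) • ⁅z, (v : M)⁆ := by
          rw [add_lie, smul_lie]
      _ = χ₀ ⟨x - (φ x / φ z) • z, hmemI x⟩ • (v : M) + ((φ x / φ z) * μ) • (v : M) := by
          rw [v.2 ⟨x - (φ x / φ z) • z, hmemI x⟩, hgv, smul_smul]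
      _ = (χ₀ ⟨x - (φ x / φ z) • z, hmemI x⟩ + (φ x / φ z) * μ) • (v : M) := by
          rw [add_smul]

end LieThm

section Extension

theorem solvable_of_abelian_ideal_quot {K : Type*} [LieRing K] [LieAlgebra ℂ K]
    (J : LieIdeal ℂ K) (hJab : ∀ x ∈ J, ∀ y ∈ J, ⁅x, y⁆ = (0 : K))
    (hquot : LieAlgebra.IsSolvable (K ⧸ J)) : LieAlgebra.IsSolvable K := by
  obtain ⟨k, hk⟩ := (LieAlgebra.isSolvable_iff ℂ _).mp hquot
  let π : K →ₗ⁅ℂ⁆ K ⧸ J :=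
    { toLinearMap := (J : Submodule ℂ K).mkQ
      map_lie' := fun {x y} => rfl }
  have hπsurj : Function.Surjective π := Submodule.mkQ_surjective _
  have hmap := LieIdeal.derivedSeries_map_eq (f := π) k hπsurj
  rw [hk] at hmap
  have hle : LieAlgebra.derivedSeries ℂ K k ≤ J := by
    have h1 := (LieIdeal.map_eq_bot_iff).mp hmap
    intro x hx
    have h2 := h1 hx
    rw [LieHom.mem_ker] at h2
    exact (Submodule.Quotient.mk_eq_zero (J : Submodule ℂ K)).mp h2
  rw [LieAlgebra.isSolvable_iff ℂ]
  refine ⟨k + 1, ?_⟩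
  rw [LieAlgebra.derivedSeries_def, LieAlgebra.derivedSeriesOfIdeal_succ]
  rw [LieSubmodule.lie_eq_bot_iff]
  intro x hx m hm
  exact hJab x (hle hx) m (hle hm)

end Extension

/-- A Borel subalgebra of a Lie algebra: a maximal solvable Lie subalgebra. -/
def IsBorelSubalgebra {L : Type*} [LieRing L] [LieAlgebra ℂ L]
    (b : LieSubalgebra ℂ L) : Prop :=
  LieAlgebra.IsSolvable b ∧
    ∀ c : LieSubalgebra ℂ L, LieAlgebra.IsSolvable c → b ≤ c → b = c

/-- No Borel subalgebra of a complex simple Lie algebra `𝔤` with nontrivial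
involution `θ` is contained in the fixed-point subalgebra `𝔨`. -/
theorem stmt_6
    {L : Type*} [LieRing L] [LieAlgebra ℂ L] [Module.Finite ℂ L]
    [LieAlgebra.IsSimple ℂ L]
    (θ : L →ₗ⁅ℂ⁆ L) (hθinv : ∀ x, θ (θ x) = x) (hθne : θ ≠ LieHom.id)
    (𝔨 : LieSubalgebra ℂ L) (h𝔨 : ∀ x, x ∈ 𝔨 ↔ θ x = x)
    (𝔟 : LieSubalgebra ℂ L) (hb : IsBorelSubalgebra 𝔟) :
    ¬ 𝔟 ≤ 𝔨 := by
  intro hbk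
  obtain ⟨hsolv, hmax⟩ := hb
  haveI : LieAlgebra.IsSolvable ↥𝔟 := hsolv
  haveI : FiniteDimensional ℂ ↥𝔟 :=
    FiniteDimensional.finiteDimensional_submodule 𝔟.toSubmodule
  have hθ𝔟 : ∀ x : ↥𝔟, θ (x : L) = (x : L) := fun x => (h𝔨 _).mp (hbk x.2)
  -- the (-1)-eigenspace of θ as a Lie submodule over 𝔟
  set S : LieSubmodule ℂ ↥𝔟 L :=
    { carrier := { x | θ x = -x }
      add_mem' := fun {x y} hx hy => by
        simp only [Set.mem_setOf_eq] at *
        rw [map_add θ, hx, hy, neg_add]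
      zero_mem' := by simp
      smul_mem' := fun t x hx => by
        simp only [Set.mem_setOf_eq] at *
        rw [map_smul θ, hx, smul_neg]
      lie_mem := fun {x m} hm => by
        simp only [Set.mem_setOf_eq] at *
        rw [LieSubalgebra.coe_bracket_of_module]
        rw [LieHom.map_lie, hθ𝔟 x, hm, lie_neg] } with hS
  have hSmem : ∀ x : L, x ∈ S ↔ θ x = -x := fun x => Iff.rfl
  haveI : FiniteDimensional ℂ ↥S :=
    FiniteDimensional.finiteDimensional_submodule (S : Submodule ℂ L)
  -- S is nontrivial
  obtain ⟨x₀, hx₀⟩ : ∃ x : L, θ x ≠ x := by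
    by_contra hcon
    push_neg at hcon
    exact hθne (LieHom.ext fun x => hcon x)
  have hs₀ : x₀ - θ x₀ ∈ S := by
    rw [hSmem, map_sub θ, hθinv x₀, neg_sub]
  have hs₀ne : x₀ - θ x₀ ≠ 0 := fun hc => hx₀ (by rw [sub_eq_zero] at hc; exact hc.symm)
  haveI : Nontrivial ↥S := nontrivial_of_ne ⟨x₀ - θ x₀, hs₀⟩ 0
    (fun hc => hs₀ne (by simpa using congrArg Subtype.val hc))
  -- apply Lie's theorem
  obtain ⟨χ, v, hvne, hv⟩ := lie_thm_aux (finrank ℂ ↥𝔟) ↥𝔟 ↥S le_rfl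
  have hvL : ∀ x : ↥𝔟, ⁅(x : L), (v : L)⁆ = χ x • (v : L) := by
    intro x
    have h1 := congrArg Subtype.val (hv x)
    rw [← LieSubalgebra.coe_bracket_of_module]
    simpa using h1
  have hvLne : (v : L) ≠ 0 := fun hc => hvne (Subtype.ext (by simpa using hc))
  have hvS : θ (v : L) = -(v : L) := v.2
  have hvnot𝔟 : (v : L) ∉ 𝔟 := by
    intro hmem
    have h1 : θ (v : L) = (v : L) := (h𝔨 _).mp (hbk hmem)
    have h2 : (2 : ℂ) • (v : L) = 0 := by
      rw [two_smul]
      rw [h1] at hvS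
      exact eq_neg_iff_add_eq_zero.mp hvS
    exact hvLne ((smul_eq_zero.mp h2).resolve_left two_ne_zero)
  -- the enlarged subalgebra
  set P : Submodule ℂ L := 𝔟.toSubmodule ⊔ ℂ ∙ (v : L) with hP
  have hdecomp : ∀ x ∈ P, ∃ (b : L) (hb : b ∈ 𝔟) (t : ℂ), x = b + t • (v : L) := by
    intro x hx
    obtain ⟨b, hbm, s, hsm, rfl⟩ := Submodule.mem_sup.mp hx
    obtain ⟨t, rfl⟩ := Submodule.mem_span_singleton.mp hsm
    exact ⟨b, hbm, t, rfl⟩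
  have hbrkP : ∀ x y, x ∈ P → y ∈ P → ⁅x, y⁆ ∈ P := by
    intro x y hx hy
    obtain ⟨b₁, hb₁, t₁, rfl⟩ := hdecomp x hx
    obtain ⟨b₂, hb₂, t₂, rfl⟩ := hdecomp y hy
    have e1 : ⁅b₁ + t₁ • (v : L), b₂ + t₂ • (v : L)⁆
        = ⁅b₁, b₂⁆ + t₂ • ⁅b₁, (v : L)⁆ + t₁ • ⁅(v : L), b₂⁆
          + t₁ • t₂ • ⁅(v : L), (v : L)⁆ := by
      simp only [lie_add, add_lie, smul_lie, lie_smul]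
      module
    rw [e1, lie_self, smul_zero, smul_zero, add_zero, hvL ⟨b₁, hb₁⟩,
      show ⁅(v : L), b₂⁆ = -⁅b₂, (v : L)⁆ from (lie_skew _ _).symm, hvL ⟨b₂, hb₂⟩]
    refine Submodule.add_mem _ (Submodule.add_mem _ ?_ ?_) ?_
    · exact Submodule.mem_sup_left (𝔟.lie_mem hb₁ hb₂)
    · exact Submodule.smul_mem _ _ (Submodule.mem_sup_right
        (Submodule.smul_mem _ _ (Submodule.mem_span_singleton_self _)))
    · exact Submodule.smul_mem _ _ (Submodule.neg_mem _ (Submodule.smul_mem _ _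
        (Submodule.mem_sup_right (Submodule.mem_span_singleton_self _))))
  set c : LieSubalgebra ℂ L := { P with lie_mem' := fun {x y} hx hy => hbrkP x y hx hy } with hc
  have hcmem : ∀ x : L, x ∈ c ↔ x ∈ P := fun x => Iff.rfl
  have h𝔟c : 𝔟 ≤ c := fun x hx => Submodule.mem_sup_left hx
  have hvc : (v : L) ∈ c := Submodule.mem_sup_right (Submodule.mem_span_singleton_self _)
  set vc : ↥c := ⟨(v : L), hvc⟩ with hvc'
  -- the span of v is an abelian ideal of c with solvable quotient
  have hliec : ∀ x : ↥c, ⁅x, vc⁆ ∈ Submodule.span ℂ {vc} := by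
    intro x
    obtain ⟨b, hbm, t, hx⟩ := hdecomp (x : L) x.2
    have e1 : (⁅x, vc⁆ : L) = χ ⟨b, hbm⟩ • (v : L) := by
      show ⁅(x : L), (v : L)⁆ = _
      rw [hx, add_lie, smul_lie, lie_self, smul_zero, add_zero, hvL ⟨b, hbm⟩]
    have e2 : ⁅x, vc⁆ = χ ⟨b, hbm⟩ • vc := Subtype.ext (by simpa using e1)
    rw [e2]
    exact Submodule.smul_mem _ _ (Submodule.mem_span_singleton_self _)
  set J : LieIdeal ℂ ↥c :=
    { Submodule.span ℂ {vc} with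
      lie_mem := fun {x m} hm => by
        obtain ⟨t, rfl⟩ := Submodule.mem_span_singleton.mp hm
        rw [lie_smul]
        exact Submodule.smul_mem _ _ (hliec x) } with hJ
  have hJmem : ∀ x : ↥c, x ∈ J ↔ x ∈ Submodule.span ℂ {vc} := fun x => Iff.rfl
  have hJab : ∀ x ∈ J, ∀ y ∈ J, ⁅x, y⁆ = (0 : ↥c) := by
    intro x hx y hy
    obtain ⟨s, rfl⟩ := Submodule.mem_span_singleton.mp hx
    obtain ⟨t, rfl⟩ := Submodule.mem_span_singleton.mp hy
    rw [lie_smul, smul_lie, lie_self, smul_zero, smul_zero]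
  have hquot : LieAlgebra.IsSolvable (↥c ⧸ J) := by
    let πc : ↥c →ₗ⁅ℂ⁆ ↥c ⧸ J :=
      { toLinearMap := (J : Submodule ℂ ↥c).mkQ
        map_lie' := fun {x y} => rfl }
    have hsurj : Function.Surjective (πc.comp (LieSubalgebra.inclusion h𝔟c)) := by
      intro q
      obtain ⟨x, rfl⟩ := Submodule.mkQ_surjective (J : Submodule ℂ ↥c) q
      obtain ⟨b, hbm, t, hx⟩ := hdecomp (x : L) x.2
      refine ⟨⟨b, hbm⟩, ?_⟩
      have hdiff : x - LieSubalgebra.inclusion h𝔟c ⟨b, hbm⟩ ∈ J := by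
        rw [hJmem]
        have : (x - LieSubalgebra.inclusion h𝔟c ⟨b, hbm⟩ : ↥c) = t • vc := by
          apply Subtype.ext
          simp only [AddSubgroupClass.coe_sub, LieSubalgebra.coe_inclusion, SetLike.val_smul, hx]
          show b + t • (v : L) - b = t • (v : L)
          abel
        rw [this]
        exact Submodule.smul_mem _ _ (Submodule.mem_span_singleton_self _)
      show Submodule.Quotient.mk _ = Submodule.Quotient.mk x
      rw [Submodule.Quotient.eq]
      have h2 := Submodule.neg_mem (J : Submodule ℂ ↥c) hdiff
      rwa [neg_sub] at h2
    exact Function.Surjective.lieAlgebra_isSolvable hsurj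
  haveI hcsolv : LieAlgebra.IsSolvable ↥c := solvable_of_abelian_ideal_quot J hJab hquot
  have heq : 𝔟 = c := hmax c hcsolv h𝔟c
  exact hvnot𝔟 (le_of_eq heq.symm hvc)
end

section
/- Let 1 ≤ r < p and q ≥ 1, n = p + q, and let G = SL_n(ℂ) with the topology induced from the space of n × n complex matrices. Let P₁ = {g ∈ G : g i j = 0 whenever j < r ≤ i or j < p ≤ i} (the stabilizer of the flag ℂ^r ⊂ ℂ^p ⊂ ℂ^n of coordinate subspaces) and P₂ = {g ∈ G : g i j = 0 whenever i < p ≤ j}. Then: (a) P₁ ∩ P₂ = Q where Q = {g ∈ G : g i j = 0 whenever j < r ≤ i, or j < p ≤ i, or i < p ≤ j} (a proper parabolic subgroup of the block diagonal subgroup K ≅ S(GL_p × GL_q)); and (b) the set {a · b : a ∈ P₁, b ∈ P₂} is dense in G. -/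
open Matrix Polynomial Filter Topology

namespace Stmt13Aux

/-- All trailing principal minors are nonzero (cascading definition). -/
def goodMat : ∀ {n : ℕ}, Matrix (Fin n) (Fin n) ℂ → Prop
  | 0, _ => True
  | _ + 1, g => g.det ≠ 0 ∧ goodMat (g.submatrix Fin.succ Fin.succ)

lemma goodMat_det : ∀ {n : ℕ} (g : Matrix (Fin n) (Fin n) ℂ), goodMat g → g.det ≠ 0
  | 0, g, _ => by simp [Matrix.det_fin_zero]
  | _ + 1, g, h => h.1

/-- UL decomposition for matrices with nonvanishing trailing principal minors. -/
lemma UL_decomp : ∀ {n : ℕ} (g : Matrix (Fin n) (Fin n) ℂ), goodMat g →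
    ∃ U L : Matrix (Fin n) (Fin n) ℂ,
      (∀ i j, j < i → U i j = 0) ∧ (∀ i, U i i = 1) ∧
      (∀ i j, i < j → L i j = 0) ∧ g = U * L := by
  intro n
  induction n with
  | zero =>
    intro g _
    exact ⟨1, 1, fun i j _ => i.elim0, fun i => i.elim0, fun i j _ => i.elim0,
      Subsingleton.elim _ _⟩
  | succ n ih =>
    intro g hg
    obtain ⟨hdet, hsub⟩ := hg
    obtain ⟨U', L', hU₁, hU₂, hL₁, hfac⟩ := ih _ hsub
    have hDdet : (g.submatrix Fin.succ Fin.succ).det ≠ 0 := goodMat_det _ hsub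
    have hU'det : U'.det = 1 := by
      rw [Matrix.det_of_upperTriangular (fun i j h => hU₁ i j h)]
      exact Finset.prod_eq_one fun i _ => hU₂ i
    have hL'det : L'.det ≠ 0 := by
      intro h0
      apply hDdet
      rw [hfac, Matrix.det_mul, h0, mul_zero]
    have hU'u : IsUnit U'.det := by rw [hU'det]; exact isUnit_one
    have hL'u : IsUnit L'.det := hL'det.isUnit
    set b : Fin n → ℂ := fun j => g 0 j.succ with hb
    set c : Fin n → ℂ := fun i => g i.succ 0 with hc
    set u : Fin n → ℂ := b ᵥ* L'⁻¹ with hu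
    set w : Fin n → ℂ := U'⁻¹ *ᵥ c with hw
    set l : ℂ := g 0 0 - u ⬝ᵥ w with hl
    have key_u : u ᵥ* L' = b := by
      rw [hu, Matrix.vecMul_vecMul, Matrix.nonsing_inv_mul _ hL'u, Matrix.vecMul_one]
    have key_w : U' *ᵥ w = c := by
      rw [hw, Matrix.mulVec_mulVec, Matrix.mul_nonsing_inv _ hU'u, Matrix.one_mulVec]
    refine ⟨Matrix.of (Fin.cons (Fin.cons 1 u) (fun i' => Fin.cons 0 (U' i'))),
      Matrix.of (Fin.cons (Fin.cons l 0) (fun i' => Fin.cons (w i') (L' i'))),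
      ?_, ?_, ?_, ?_⟩
    · intro i j hij
      induction i using Fin.cases with
      | zero => exact absurd hij (Fin.not_lt_zero j)
      | succ i' =>
        induction j using Fin.cases with
        | zero => simp
        | succ j' =>
          simp only [Matrix.of_apply, Fin.cons_succ]
          exact hU₁ i' j' (by simpa [Fin.succ_lt_succ_iff] using hij)
    · intro i
      induction i using Fin.cases with
      | zero => simp
      | succ i' => simpa using hU₂ i'
    · intro i j hij
      induction i using Fin.cases with
      | zero =>
        induction j using Fin.cases with
        | zero => exact absurd hij (lt_irrefl _)
        | succ j' => simp
      | succ i' =>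
        induction j using Fin.cases with
        | zero => exact absurd hij (by simp [Fin.lt_def])
        | succ j' =>
          simp only [Matrix.of_apply, Fin.cons_succ]
          exact hL₁ i' j' (by simpa [Fin.succ_lt_succ_iff] using hij)
    · ext i j
      rw [Matrix.mul_apply, Fin.sum_univ_succ]
      induction i using Fin.cases with
      | zero =>
        induction j using Fin.cases with
        | zero =>
          simp only [Matrix.of_apply, Fin.cons_zero, Fin.cons_succ, one_mul]
          rw [hl]
          simp [dotProduct]
        | succ j' =>
          simp only [Matrix.of_apply, Fin.cons_zero, Fin.cons_succ, one_mul, Pi.zero_apply,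
            zero_add]
          have := congrFun key_u j'
          simpa [Matrix.vecMul, dotProduct] using this.symm
      | succ i' =>
        induction j using Fin.cases with
        | zero =>
          simp only [Matrix.of_apply, Fin.cons_zero, Fin.cons_succ, zero_mul, zero_add]
          have := congrFun key_w i'
          simpa [Matrix.mulVec, dotProduct] using this.symm
        | succ j' =>
          simp only [Matrix.of_apply, Fin.cons_zero, Fin.cons_succ, zero_mul, zero_add]
          have := congrFun (congrFun hfac i') j'
          simpa [Matrix.submatrix_apply, Matrix.mul_apply] using this
    
lemma eval_charpoly_neg {n : ℕ} (g : Matrix (Fin n) (Fin n) ℂ) (t : ℂ) :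
    Polynomial.eval t (Matrix.charpoly (-g)) = (g + t • (1 : Matrix (Fin n) (Fin n) ℂ)).det := by
  rw [Matrix.charpoly, ← Polynomial.coe_evalRingHom, RingHom.map_det]
  congr 1
  ext i j
  by_cases h : i = j
  · subst h
    simp [Matrix.charmatrix_apply_eq, Matrix.one_apply, Matrix.map_apply, add_comm]
  · simp [Matrix.charmatrix_apply_ne _ _ _ h, Matrix.one_apply, h, Matrix.map_apply]

lemma submatrix_add_smul_one {n : ℕ} (g : Matrix (Fin (n + 1)) (Fin (n + 1)) ℂ) (t : ℂ) :
    (g + t • (1 : Matrix (Fin (n + 1)) (Fin (n + 1)) ℂ)).submatrix Fin.succ Fin.succ =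
      g.submatrix Fin.succ Fin.succ + t • (1 : Matrix (Fin n) (Fin n) ℂ) := by
  ext i j
  simp [Matrix.submatrix_apply, Matrix.one_apply, Fin.succ_inj]

lemma bad_finite : ∀ {n : ℕ} (g : Matrix (Fin n) (Fin n) ℂ),
    {t : ℂ | ¬ goodMat (g + t • 1)}.Finite := by
  intro n
  induction n with
  | zero => intro g; convert Set.finite_empty; ext t; simp [goodMat]
  | succ n ih =>
    intro g
    apply Set.Finite.subset
      (Set.Finite.union
        (Set.Finite.subset (Polynomial.finite_setOf_isRoot
          (p := Matrix.charpoly (-(g : Matrix (Fin (n+1)) (Fin (n+1)) ℂ)))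
          (Matrix.charpoly_monic _).ne_zero)
          (by
            intro t ht
            simp only [Set.mem_setOf_eq, Polynomial.IsRoot]
            rw [eval_charpoly_neg]
            exact ht))
        (ih (g.submatrix Fin.succ Fin.succ)))
    intro t ht
    simp only [Set.mem_setOf_eq, goodMat, not_and_or, not_not, not_ne_iff] at ht
    rcases ht with h | h
    · exact Or.inl h
    · refine Or.inr ?_
      simp only [Set.mem_setOf_eq]
      rw [← submatrix_add_smul_one]
      exact h

/-- Density of the set of unit-determinant UL products in `SL_n(ℂ)`. -/
lemma dense_UL {n : ℕ} (hn : n ≠ 0) (g : Matrix (Fin n) (Fin n) ℂ) (hg : g.det = 1) :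
    g ∈ closure {x : Matrix (Fin n) (Fin n) ℂ |
      ∃ U L : Matrix (Fin n) (Fin n) ℂ, (∀ i j, j < i → U i j = 0) ∧ U.det = 1 ∧
        (∀ i j, i < j → L i j = 0) ∧ L.det = 1 ∧ x = U * L} := by
  obtain ⟨m, rfl⟩ := Nat.exists_eq_succ_of_ne_zero hn
  set d : ℂ → ℂ := fun t => (g + t • 1).det with hd
  have hd0 : d 0 = 1 := by simp [hd, hg]
  set v : ℂ → Fin (m + 1) → ℂ := fun t i => if i = 0 then (d t)⁻¹ else 1 with hv
  set f : ℂ → Matrix (Fin (m + 1)) (Fin (m + 1)) ℂ :=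
    fun t => Matrix.diagonal (v t) * (g + t • 1) with hf
  set s : Set ℂ := {t | t ≠ 0 ∧ goodMat (g + t • 1)} with hs
  -- s is a punctured neighborhood of 0
  have hsmem : s ∈ 𝓝[≠] (0 : ℂ) := by
    have hbad := bad_finite g
    have hcl : IsClosed ({t : ℂ | ¬ goodMat (g + t • 1)} \ {0}) :=
      (hbad.subset Set.diff_subset).isClosed
    refine mem_nhdsWithin.mpr ⟨({t : ℂ | ¬ goodMat (g + t • 1)} \ {0})ᶜ, hcl.isOpen_compl,
      by simp, ?_⟩
    rintro t ⟨ht1, ht2⟩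
    have ht2' : t ≠ 0 := ht2
    refine ⟨ht2', ?_⟩
    by_contra hgg
    exact ht1 ⟨hgg, ht2'⟩
  have hne : (𝓝[s] (0 : ℂ)).NeBot := by
    rw [← mem_closure_iff_nhdsWithin_neBot]
    refine mem_closure_iff_nhds.mpr fun U hU => ?_
    exact Filter.nonempty_of_mem (Filter.inter_mem (nhdsWithin_le_nhds hU) hsmem)
  -- f tends to g
  have hdc : Continuous d := by
    have : Continuous fun t : ℂ => g + t • (1 : Matrix (Fin (m + 1)) (Fin (m + 1)) ℂ) :=
      continuous_const.add (continuous_id.smul continuous_const)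
    exact this.matrix_det
  have hca : ContinuousAt f 0 := by
    refine ContinuousAt.mul ?_ ?_
    · have h1 : ContinuousAt v 0 := by
        refine continuousAt_pi.mpr fun i => ?_
        by_cases h : i = 0
        · subst h
          have h2 : ContinuousAt (fun t => (d t)⁻¹) 0 :=
            (hdc.continuousAt).inv₀ (by rw [hd0]; exact one_ne_zero)
          simpa [hv] using h2
        · simpa [hv, if_neg h] using continuousAt_const
      exact (continuous_id.matrix_diagonal.continuousAt).comp h1
    · exact (continuous_const.add (continuous_id.smul continuous_const)).continuousAt
  have hf0 : f 0 = g := by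
    have : v 0 = fun _ => 1 := by
      funext i
      by_cases h : i = 0 <;> simp [hv, h, hd0]
    simp [hf, this, Matrix.diagonal_one]
  have htend : Tendsto f (𝓝[s] 0) (𝓝 g) := by
    have := hca.tendsto
    rw [hf0] at this
    exact this.mono_left nhdsWithin_le_nhds
  -- f t lies in the set of UL products for t ∈ s
  have hmem : ∀ t ∈ s, f t ∈ {x : Matrix (Fin (m + 1)) (Fin (m + 1)) ℂ |
      ∃ U L : Matrix (Fin (m + 1)) (Fin (m + 1)) ℂ,
        (∀ i j, j < i → U i j = 0) ∧ U.det = 1 ∧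
        (∀ i j, i < j → L i j = 0) ∧ L.det = 1 ∧ x = U * L} := by
    rintro t ⟨ht0, htg⟩
    have hdt : d t ≠ 0 := goodMat_det _ htg
    have hdetE : (Matrix.diagonal (v t)).det = (d t)⁻¹ := by
      rw [Matrix.det_diagonal]
      rw [show v t = fun i => if i = 0 then (d t)⁻¹ else 1 from rfl]
      simp
    have hdet1 : (f t).det = 1 := by
      rw [hf]
      simp only [Matrix.det_mul, hdetE]
      exact inv_mul_cancel₀ hdt
    have hgood : goodMat (f t) := by
      refine ⟨by rw [hdet1]; exact one_ne_zero, ?_⟩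
      have hsub : (f t).submatrix Fin.succ Fin.succ =
          (g + t • 1).submatrix Fin.succ Fin.succ := by
        ext i j
        simp [hf, Matrix.submatrix_apply, Matrix.diagonal_mul, hv, Fin.succ_ne_zero]
      rw [hsub]
      exact htg.2
    obtain ⟨U, L, hU1, hU2, hL1, hfac⟩ := UL_decomp _ hgood
    have hUdet : U.det = 1 := by
      rw [Matrix.det_of_upperTriangular (fun i j h => hU1 i j h)]
      exact Finset.prod_eq_one fun i _ => hU2 i
    have hLdet : L.det = 1 := by
      have := hdet1
      rw [hfac, Matrix.det_mul, hUdet, one_mul] at this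
      exact this
    exact ⟨U, L, hU1, hUdet, hL1, hLdet, hfac⟩
  exact mem_closure_of_tendsto htend
    (Filter.mem_of_superset self_mem_nhdsWithin hmem)

end Stmt13Aux

/-- **Theorem 2.5 (1)** for the Hermitian pair `(SL_{p+q}(ℂ), S(GL_p × GL_q))`
with `Q` a proper parabolic subgroup of `K`: the parabolic `P₁` stabilizing
the flag `ℂ^r ⊂ ℂ^p ⊂ ℂ^n` and the block lower triangular parabolic `P₂`
intersect in `Q` and their product `P₁P₂` is dense in `G = SL_n(ℂ)`. -/
theorem stmt_13 (r p q : ℕ) (hr : 1 ≤ r) (hrp : r < p) (hq : 1 ≤ q)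
    (G P₁ P₂ Q : Set (Matrix (Fin (p + q)) (Fin (p + q)) ℂ))
    (hG : G = {g | g.det = 1})
    (hP₁ : P₁ = {g | g.det = 1 ∧
      ∀ i j : Fin (p + q),
        (((j : ℕ) < r ∧ r ≤ (i : ℕ)) ∨ ((j : ℕ) < p ∧ p ≤ (i : ℕ))) →
          g i j = 0})
    (hP₂ : P₂ = {g | g.det = 1 ∧
      ∀ i j : Fin (p + q), (i : ℕ) < p → p ≤ (j : ℕ) → g i j = 0})
    (hQ : Q = {g | g.det = 1 ∧
      ∀ i j : Fin (p + q),
        (((j : ℕ) < r ∧ r ≤ (i : ℕ)) ∨ ((j : ℕ) < p ∧ p ≤ (i : ℕ)) ∨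
          ((i : ℕ) < p ∧ p ≤ (j : ℕ))) →
          g i j = 0}) :
    P₁ ∩ P₂ = Q ∧
      ∀ g ∈ G, g ∈ closure {m | ∃ a ∈ P₁, ∃ b ∈ P₂, m = a * b} := by
  subst hG hP₁ hP₂ hQ
  constructor
  · ext g
    simp only [Set.mem_inter_iff, Set.mem_setOf_eq]
    constructor
    · rintro ⟨⟨hd, h1⟩, ⟨-, h2⟩⟩
      refine ⟨hd, fun i j hij => ?_⟩
      rcases hij with h | h | h
      · exact h1 i j (Or.inl h)
      · exact h1 i j (Or.inr h)
      · exact h2 i j h.1 h.2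
    · rintro ⟨hd, h⟩
      exact ⟨⟨hd, fun i j hij => h i j (by tauto)⟩,
        hd, fun i j h1 h2 => h i j (Or.inr (Or.inr ⟨h1, h2⟩))⟩
  · intro g hg
    simp only [Set.mem_setOf_eq] at hg
    refine closure_mono ?_ (Stmt13Aux.dense_UL (by omega) g hg)
    rintro x ⟨U, L, hU1, hU2, hL1, hL2, rfl⟩
    refine ⟨U, ⟨hU2, fun i j hij => hU1 i j ?_⟩, L, ⟨hL2, fun i j h1 h2 => hL1 i j ?_⟩, rfl⟩
    · rw [Fin.lt_def]
      rcases hij with ⟨ha, hb⟩ | ⟨ha, hb⟩ <;> omega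
    · rw [Fin.lt_def]; omega
end

section
/- Let n ≥ 1 and let Sp_{2n}(ℂ) = {M ∈ Mat_{2n×2n}(ℂ) : M J Mᵀ = J}, where J is the standard skew-symmetric block matrix with blocks J = [[0, 1],[−1, 0]] (1 the n × n identity), indexed by the type Fin n ⊕ Fin n, with the topology induced from the space of 2n × 2n complex matrices. Let P₁ = {g ∈ Sp_{2n}(ℂ) : g (inr i) (inl j) = 0 for all i, j} and P₂ = {g ∈ Sp_{2n}(ℂ) : g (inl i) (inr j) = 0 for all i, j} (the two opposite Siegel parabolic subgroups). Then: (a) P₁ ∩ P₂ = {g ∈ Sp_{2n}(ℂ) : g (inr i) (inl j) = 0 and g (inl i) (inr j) = 0 for all i, j}, the block diagonal subgroup (isomorphic to GL_n(ℂ), the symmetric subgroup K); and (b) the set {a · b : a ∈ P₁, b ∈ P₂} is dense in Sp_{2n}(ℂ). -/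
open Matrix

namespace Stmt14Aux

noncomputable section

variable {n : ℕ}

def Jm (n : ℕ) : Matrix (Fin n ⊕ Fin n) (Fin n ⊕ Fin n) ℂ := Matrix.fromBlocks 0 1 (-1) 0

lemma JJ : Jm n * Jm n = -1 := by
  have : (-1 : Matrix (Fin n ⊕ Fin n) (Fin n ⊕ Fin n) ℂ) = fromBlocks (-1) 0 0 (-1) := by
    rw [← Matrix.fromBlocks_one, Matrix.fromBlocks_neg]
    simp
  rw [this, Jm, Matrix.fromBlocks_multiply]
  simp

def sp (n : ℕ) : Set (Matrix (Fin n ⊕ Fin n) (Fin n ⊕ Fin n) ℂ) :=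
  {M | M * Jm n * Mᵀ = Jm n}

lemma one_mem : (1 : Matrix (Fin n ⊕ Fin n) (Fin n ⊕ Fin n) ℂ) ∈ sp n := by
  simp [sp]

lemma mul_mem {M N : Matrix (Fin n ⊕ Fin n) (Fin n ⊕ Fin n) ℂ}
    (hM : M ∈ sp n) (hN : N ∈ sp n) : M * N ∈ sp n := by
  simp only [sp, Set.mem_setOf_eq] at *
  rw [Matrix.transpose_mul]
  calc M * N * Jm n * (Nᵀ * Mᵀ) = M * (N * Jm n * Nᵀ) * Mᵀ := by
        simp only [Matrix.mul_assoc]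
    _ = Jm n := by rw [hN, hM]

lemma detJ_sq : (Jm n).det * (Jm n).det = 1 := by
  have := congrArg Matrix.det (JJ (n := n))
  rwa [Matrix.det_mul, Matrix.det_neg, Matrix.det_one, Fintype.card_sum, Fintype.card_fin,
    mul_one, Even.neg_one_pow ⟨n, rfl⟩] at this

lemma detJ_ne : (Jm n).det ≠ 0 := by
  intro h
  have := detJ_sq (n := n)
  rw [h, mul_zero] at this
  exact zero_ne_one this

lemma det_isUnit {M : Matrix (Fin n ⊕ Fin n) (Fin n ⊕ Fin n) ℂ}
    (hM : M ∈ sp n) : IsUnit M.det := by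
  have h := congrArg Matrix.det hM
  rw [Matrix.det_mul, Matrix.det_mul, Matrix.det_transpose] at h
  have h2 : M.det * M.det * (Jm n).det = 1 * (Jm n).det := by
    rw [one_mul]; linear_combination h
  have h3 := mul_right_cancel₀ (detJ_ne (n := n)) h2
  exact isUnit_iff_exists_inv.mpr ⟨_, h3⟩

lemma transpose_rel {M : Matrix (Fin n ⊕ Fin n) (Fin n ⊕ Fin n) ℂ}
    (hM : M ∈ sp n) : Mᵀ * Jm n * M = Jm n := by
  have h1 : M * (Jm n * Mᵀ * -Jm n) = 1 := by
    calc M * (Jm n * Mᵀ * -Jm n) = (M * Jm n * Mᵀ) * -Jm n := by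
          simp only [Matrix.mul_assoc]
      _ = Jm n * -Jm n := by rw [hM]
      _ = 1 := by rw [Matrix.mul_neg, JJ, neg_neg]
  have h2 : (Jm n * Mᵀ * -Jm n) * M = 1 := mul_eq_one_comm.mp h1
  have h3 : -Jm n * (Jm n * Mᵀ * -Jm n * M) = -Jm n * 1 := by rw [h2]
  have h4 : -Jm n * Jm n = 1 := by rw [Matrix.neg_mul, JJ, neg_neg]
  simp only [← Matrix.mul_assoc, Matrix.mul_one] at h3
  rw [h4, one_mul] at h3
  have h5 : -(Mᵀ * Jm n * M) = -Jm n := by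
    rw [← h3]; simp only [Matrix.mul_neg, Matrix.neg_mul]
  exact neg_inj.mp h5

lemma strip {m : Type*} [Fintype m] [DecidableEq m] {v : m → ℂ} {Q Q' : Matrix m m ℂ}
    (h : Matrix.vecMul v Q = 0) (hQ : Q * Q' = 1) : v = 0 := by
  have h2 := congrArg (fun w => Matrix.vecMul w Q') h
  simpa [Matrix.vecMul_vecMul, hQ, Matrix.vecMul_one, Matrix.zero_vecMul] using h2

lemma diag_case (d : Fin n → ℂ) (C' : Matrix (Fin n) (Fin n) ℂ)
    (h1 : C' * Matrix.diagonal d = Matrix.diagonal d * C'ᵀ)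
    (h2 : ∀ v : Fin n → ℂ, Matrix.vecMul v C' = 0 →
      Matrix.vecMul v (Matrix.diagonal d) = 0 → v = 0) :
    ∃ X : Matrix (Fin n) (Fin n) ℂ, Xᵀ = X ∧
      IsUnit (Matrix.diagonal d + C' * X).det := by
  classical
  set X : Matrix (Fin n) (Fin n) ℂ :=
    Matrix.diagonal (fun i => if d i = 0 then (1:ℂ) else 0) with hXdef
  refine ⟨X, Matrix.diagonal_transpose _, ?_⟩
  have hC0 : ∀ i j, d i = 0 → d j ≠ 0 → C' i j = 0 := by
    intro i j hdi hdj
    have h3 := congrFun (congrFun h1 i) j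
    rw [Matrix.mul_diagonal, Matrix.diagonal_mul, Matrix.transpose_apply, hdi, zero_mul] at h3
    exact (mul_eq_zero.mp h3).resolve_right hdj
  set M' : Matrix (Fin n) (Fin n) ℂ := Matrix.diagonal d + C' * X with hM'def
  have hM'app : ∀ i j, M' i j =
      (if i = j then d i else 0) + C' i j * (if d j = 0 then 1 else 0) := by
    intro i j
    simp [hM'def, hXdef, Matrix.add_apply, Matrix.mul_diagonal, Matrix.diagonal_apply]
  set p : Fin n → Prop := fun i => d i = 0 with hpdef
  set e := Equiv.sumCompl p with hedef
  have key : M'.submatrix e e =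
      Matrix.fromBlocks (Matrix.of fun i j : {x // p x} => C' i.1 j.1) 0
        (Matrix.of fun (i : {x // ¬ p x}) (j : {x // p x}) => M' i.1 j.1)
        (Matrix.diagonal fun i : {x // ¬ p x} => d i.1) := by
    ext i j
    cases i with
    | inl i =>
      cases j with
      | inl j =>
        simp only [Matrix.submatrix_apply, hedef, Equiv.sumCompl_apply_inl,
          Matrix.fromBlocks_apply₁₁, Matrix.of_apply, hM'app]
        rw [if_pos j.2]
        have : (if (i:Fin n) = j then d i.1 else 0) = 0 := by
          split
          · exact i.2
          · rfl
        rw [this, zero_add, mul_one]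
      | inr j =>
        simp only [Matrix.submatrix_apply, hedef, Equiv.sumCompl_apply_inl,
          Equiv.sumCompl_apply_inr, Matrix.fromBlocks_apply₁₂, Matrix.of_apply, hM'app,
          Matrix.zero_apply]
        rw [if_neg j.2, mul_zero, add_zero]
        split
        · exact i.2
        · rfl
    | inr i =>
      cases j with
      | inl j =>
        simp [Matrix.submatrix_apply, hedef, Matrix.fromBlocks_apply₂₁, Matrix.of_apply]
      | inr j =>
        simp only [Matrix.submatrix_apply, hedef, Equiv.sumCompl_apply_inr,
          Matrix.fromBlocks_apply₂₂, Matrix.of_apply, hM'app, Matrix.diagonal_apply]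
        rw [if_neg j.2, mul_zero, add_zero]
        exact if_congr Subtype.coe_inj rfl rfl
  have hdet : M'.det = (Matrix.of fun i j : {x // p x} => C' i.1 j.1).det *
      (Matrix.diagonal fun i : {x // ¬ p x} => d i.1).det := by
    rw [← Matrix.det_submatrix_equiv_self e, key, Matrix.det_fromBlocks_zero₁₂]
  have hdiagdet : (Matrix.diagonal fun i : {x // ¬ p x} => d i.1).det ≠ 0 := by
    rw [Matrix.det_diagonal]
    exact Finset.prod_ne_zero_iff.mpr (fun i _ => i.2)
  have hCZZ : (Matrix.of fun i j : {x // p x} => C' i.1 j.1).det ≠ 0 := by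
    intro h0
    rw [← Matrix.det_transpose] at h0
    obtain ⟨v, hv, hv0⟩ := (Matrix.exists_mulVec_eq_zero_iff).mpr h0
    have hvec : Matrix.vecMul v (Matrix.of fun i j : {x // p x} => C' i.1 j.1) = 0 := by
      rw [← Matrix.mulVec_transpose]; exact hv0
    set w : Fin n → ℂ := fun i => if h : p i then v ⟨i, h⟩ else 0 with hwdef
    have hw1 : Matrix.vecMul w C' = 0 := by
      funext j
      show ∑ i, w i * C' i j = 0
      rw [← Equiv.sum_comp e (fun i => w i * C' i j), Fintype.sum_sum_type]
      by_cases hj : p j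
      · have hS2 : ∀ i : {x // ¬ p x}, w (e (Sum.inr i)) * C' (e (Sum.inr i)) j = 0 := by
          intro i
          simp [hedef, hwdef, dif_neg i.2]
        have hS1 : ∑ i : {x // p x}, w (e (Sum.inl i)) * C' (e (Sum.inl i)) j
            = Matrix.vecMul v (Matrix.of fun i j : {x // p x} => C' i.1 j.1) ⟨j, hj⟩ := by
          show _ = ∑ i, v i * _
          apply Finset.sum_congr rfl
          intro i _
          simp [hedef, hwdef, dif_pos i.2]
        rw [Finset.sum_congr rfl (fun i _ => hS2 i), hS1, hvec]
        simp
      · have : ∀ i : Fin n, w i * C' i j = 0 := by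
          intro i
          by_cases hi : p i
          · rw [hC0 i j hi hj, mul_zero]
          · simp [hwdef, dif_neg hi]
        simp [hedef, this]
    have hw2 : Matrix.vecMul w (Matrix.diagonal d) = 0 := by
      funext j
      rw [Matrix.vecMul_diagonal, Pi.zero_apply]
      by_cases hj : p j
      · rw [hj, mul_zero]
      · simp [hwdef, dif_neg hj]
    have hw0 := h2 w hw1 hw2
    apply hv
    funext i
    have hvi : v i = w i.1 := by simp [hwdef, dif_pos i.2]
    rw [hvi, hw0, Pi.zero_apply]; rfl
  rw [hM'def] at *
  exact isUnit_iff_ne_zero.mpr (hdet ▸ mul_ne_zero hCZZ hdiagdet)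

open Matrix.TransvectionStruct in
lemma exists_sym (Cb Db : Matrix (Fin n) (Fin n) ℂ)
    (hsym : Cb * Dbᵀ = Db * Cbᵀ)
    (hker : ∀ v : Fin n → ℂ, Matrix.vecMul v Cb = 0 → Matrix.vecMul v Db = 0 → v = 0) :
    ∃ X : Matrix (Fin n) (Fin n) ℂ, Xᵀ = X ∧ IsUnit (Db + Cb * X).det := by
  classical
  obtain ⟨L, L', d, hd⟩ :=
    Matrix.Pivot.exists_list_transvec_mul_mul_list_transvec_eq_diagonal Db
  set T := (L.map toMatrix).prod with hTdef
  set P := (L'.map toMatrix).prod with hPdef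
  have hTdet : T.det = 1 := by simp [hTdef]
  have hPdet : P.det = 1 := by simp [hPdef]
  have hTu : IsUnit T.det := by rw [hTdet]; exact isUnit_one
  have hPu : IsUnit P.det := by rw [hPdet]; exact isUnit_one
  have hT1 : T * T⁻¹ = 1 := Matrix.mul_nonsing_inv T hTu
  have hT1' : T⁻¹ * T = 1 := Matrix.nonsing_inv_mul T hTu
  have hP1 : P * P⁻¹ = 1 := Matrix.mul_nonsing_inv P hPu
  have hP1' : P⁻¹ * P = 1 := Matrix.nonsing_inv_mul P hPu
  have hPt1 : P⁻¹ᵀ * Pᵀ = 1 := by rw [← Matrix.transpose_mul, hP1]; exact Matrix.transpose_one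
  have hPt1' : Pᵀ * P⁻¹ᵀ = 1 := by rw [← Matrix.transpose_mul, hP1']; exact Matrix.transpose_one
  set C' := T * Cb * P⁻¹ᵀ with hC'def
  have hCt : C'ᵀ = P⁻¹ * Cbᵀ * Tᵀ := by
    rw [hC'def, Matrix.transpose_mul, Matrix.transpose_mul, Matrix.transpose_transpose,
      Matrix.mul_assoc]
  have hmain : C' * (T * Db * P)ᵀ = (T * Db * P) * C'ᵀ := by
    rw [hCt, hC'def]
    calc T * Cb * P⁻¹ᵀ * (T * Db * P)ᵀ
        = T * Cb * (P⁻¹ᵀ * Pᵀ) * Dbᵀ * Tᵀ := by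
          rw [Matrix.transpose_mul, Matrix.transpose_mul]
          simp only [Matrix.mul_assoc]
      _ = T * (Cb * Dbᵀ) * Tᵀ := by rw [hPt1]; simp only [Matrix.mul_one, Matrix.mul_assoc]
      _ = T * (Db * Cbᵀ) * Tᵀ := by rw [hsym]
      _ = T * Db * (P * P⁻¹) * Cbᵀ * Tᵀ := by rw [hP1]; simp only [Matrix.mul_one, Matrix.mul_assoc]
      _ = T * Db * P * (P⁻¹ * Cbᵀ * Tᵀ) := by simp only [Matrix.mul_assoc]
  have h1 : C' * Matrix.diagonal d = Matrix.diagonal d * C'ᵀ := by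
    calc C' * Matrix.diagonal d = C' * (Matrix.diagonal d)ᵀ := by rw [Matrix.diagonal_transpose]
      _ = C' * (T * Db * P)ᵀ := by rw [hd]
      _ = (T * Db * P) * C'ᵀ := hmain
      _ = Matrix.diagonal d * C'ᵀ := by rw [hd]
  have h2 : ∀ v : Fin n → ℂ, Matrix.vecMul v C' = 0 →
      Matrix.vecMul v (Matrix.diagonal d) = 0 → v = 0 := by
    intro v hvC hvD
    rw [← hd] at hvD
    rw [hC'def] at hvC
    have hvC2 : Matrix.vecMul (Matrix.vecMul (Matrix.vecMul v T) Cb) P⁻¹ᵀ = 0 := by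
      rw [Matrix.vecMul_vecMul, Matrix.vecMul_vecMul, ← Matrix.mul_assoc]; exact hvC
    have hvC3 := strip hvC2 hPt1
    have hvD2 : Matrix.vecMul (Matrix.vecMul (Matrix.vecMul v T) Db) P = 0 := by
      rw [Matrix.vecMul_vecMul, Matrix.vecMul_vecMul, ← Matrix.mul_assoc]; exact hvD
    have hvD3 := strip hvD2 hP1
    have hvT := hker _ hvC3 hvD3
    exact strip hvT hT1
  obtain ⟨X, hXs, hXdet⟩ := diag_case d C' h1 h2
  refine ⟨P⁻¹ᵀ * X * P⁻¹, ?_, ?_⟩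
  · rw [Matrix.transpose_mul, Matrix.transpose_mul, Matrix.transpose_transpose, hXs,
      Matrix.mul_assoc]
  · have key : T * (Db + Cb * (P⁻¹ᵀ * X * P⁻¹)) * P = Matrix.diagonal d + C' * X := by
      rw [← hd, hC'def]
      rw [Matrix.mul_add, Matrix.add_mul]
      congr 1
      calc T * (Cb * (P⁻¹ᵀ * X * P⁻¹)) * P
          = T * Cb * P⁻¹ᵀ * X * (P⁻¹ * P) := by simp only [Matrix.mul_assoc]
        _ = T * Cb * P⁻¹ᵀ * X := by rw [hP1']; rw [Matrix.mul_one]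
    have hdet2 := congrArg Matrix.det key
    rw [Matrix.det_mul, Matrix.det_mul, hTdet, hPdet, one_mul, mul_one] at hdet2
    rw [← hdet2] at hXdet
    exact hXdet

lemma tri_mem (Y : Matrix (Fin n) (Fin n) ℂ) (hY : Yᵀ = Y) :
    (Matrix.fromBlocks 1 Y 0 1 : Matrix (Fin n ⊕ Fin n) (Fin n ⊕ Fin n) ℂ) ∈ sp n := by
  show _ * Jm n * _ = Jm n
  rw [Jm, Matrix.fromBlocks_transpose, Matrix.fromBlocks_multiply, Matrix.fromBlocks_multiply,
    Matrix.fromBlocks_inj]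
  refine ⟨?_, by simp, by simp, by simp⟩
  simp only [Matrix.mul_zero, Matrix.mul_one, Matrix.zero_mul, Matrix.one_mul,
    zero_add, add_zero, mul_neg_one, Matrix.neg_mul, Matrix.transpose_one]
  simp [hY]

lemma factor {M : Matrix (Fin n ⊕ Fin n) (Fin n ⊕ Fin n) ℂ} (hM : M ∈ sp n)
    (hD : IsUnit (M.toBlocks₂₂).det) :
    ∃ a b : Matrix (Fin n ⊕ Fin n) (Fin n ⊕ Fin n) ℂ,
      a ∈ sp n ∧ (∀ i j : Fin n, a (Sum.inr i) (Sum.inl j) = 0) ∧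
      b ∈ sp n ∧ (∀ i j : Fin n, b (Sum.inl i) (Sum.inr j) = 0) ∧ M = a * b := by
  set A := M.toBlocks₁₁ with hA
  set B := M.toBlocks₁₂ with hB
  set Cm := M.toBlocks₂₁ with hC
  set Dm := M.toBlocks₂₂ with hDm
  have hMblocks : M = fromBlocks A B Cm Dm := (Matrix.fromBlocks_toBlocks M).symm
  have hTr := transpose_rel hM
  rw [hMblocks] at hTr
  rw [Jm, Matrix.fromBlocks_transpose, Matrix.fromBlocks_multiply,
    Matrix.fromBlocks_multiply] at hTr
  have hBD : Bᵀ * Dm = Dmᵀ * B := by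
    have h := congrArg Matrix.toBlocks₂₂ hTr
    simp only [Matrix.toBlocks_fromBlocks₂₂, Matrix.mul_zero, Matrix.mul_one,
      Matrix.zero_mul, Matrix.one_mul, zero_add, add_zero, mul_neg_one, Matrix.neg_mul] at h
    linear_combination (norm := module) h
  have hDt : IsUnit Dmᵀ.det := by rw [Matrix.det_transpose]; exact hD
  have hDinv1 : Dm * Dm⁻¹ = 1 := Matrix.mul_nonsing_inv Dm hD
  have hDinv2 : Dm⁻¹ * Dm = 1 := Matrix.nonsing_inv_mul Dm hD
  set X' := B * Dm⁻¹ with hX'def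
  have hBt : Bᵀ = Dmᵀ * X' := by
    calc Bᵀ = Bᵀ * (Dm * Dm⁻¹) := by rw [hDinv1, Matrix.mul_one]
      _ = Bᵀ * Dm * Dm⁻¹ := by rw [Matrix.mul_assoc]
      _ = Dmᵀ * B * Dm⁻¹ := by rw [hBD]
      _ = Dmᵀ * X' := by rw [hX'def, Matrix.mul_assoc]
  have hX's : X'ᵀ = X' := by
    rw [hX'def, Matrix.transpose_mul, Matrix.transpose_nonsing_inv]
    calc Dmᵀ⁻¹ * Bᵀ = Dmᵀ⁻¹ * (Dmᵀ * X') := by rw [hBt]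
      _ = (Dmᵀ⁻¹ * Dmᵀ) * X' := by rw [Matrix.mul_assoc]
      _ = X' := by rw [Matrix.nonsing_inv_mul _ hDt, Matrix.one_mul]
  have hX'Dm : X' * Dm = B := by
    rw [hX'def, Matrix.mul_assoc, hDinv2, Matrix.mul_one]
  have ha := tri_mem X' hX's
  have ha' := tri_mem (-X') (by rw [Matrix.transpose_neg, hX's])
  set a : Matrix (Fin n ⊕ Fin n) (Fin n ⊕ Fin n) ℂ := Matrix.fromBlocks 1 X' 0 1 with hadef
  set a' : Matrix (Fin n ⊕ Fin n) (Fin n ⊕ Fin n) ℂ := Matrix.fromBlocks 1 (-X') 0 1 with ha'def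
  have haa' : a * a' = 1 := by
    rw [hadef, ha'def, Matrix.fromBlocks_multiply, ← Matrix.fromBlocks_one]
    congr 1 <;> simp
  set b := a' * M with hbdef
  have hb2 : b = Matrix.fromBlocks (1 * A + -X' * Cm) (1 * B + -X' * Dm)
      ((0:Matrix (Fin n) (Fin n) ℂ) * A + 1 * Cm) ((0:Matrix (Fin n) (Fin n) ℂ) * B + 1 * Dm) := by
    rw [hbdef, ha'def, hMblocks, Matrix.fromBlocks_multiply]
  have h12 : 1 * B + -X' * Dm = (0 : Matrix (Fin n) (Fin n) ℂ) := by
    rw [Matrix.one_mul, Matrix.neg_mul, hX'Dm]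
    exact add_neg_cancel B
  rw [h12] at hb2
  refine ⟨a, b, ha, ?_, mul_mem ha' hM, ?_, ?_⟩
  · intro i j
    rw [hadef, Matrix.fromBlocks_apply₂₁, Matrix.zero_apply]
  · intro i j
    rw [hb2, Matrix.fromBlocks_apply₁₂, Matrix.zero_apply]
  · rw [hbdef, ← Matrix.mul_assoc, haa', Matrix.one_mul]

lemma csym {g : Matrix (Fin n ⊕ Fin n) (Fin n ⊕ Fin n) ℂ} (hg : g ∈ sp n) :
    g.toBlocks₂₁ * g.toBlocks₂₂ᵀ = g.toBlocks₂₂ * g.toBlocks₂₁ᵀ := by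
  have h := hg
  rw [show g = fromBlocks g.toBlocks₁₁ g.toBlocks₁₂ g.toBlocks₂₁ g.toBlocks₂₂ from
    (Matrix.fromBlocks_toBlocks g).symm] at h
  rw [sp, Set.mem_setOf_eq, Jm, Matrix.fromBlocks_transpose, Matrix.fromBlocks_multiply,
    Matrix.fromBlocks_multiply] at h
  have h2 := congrArg Matrix.toBlocks₂₂ h
  simp only [Matrix.toBlocks_fromBlocks₂₂, Matrix.fromBlocks_toBlocks, Matrix.mul_zero,
    Matrix.mul_one, Matrix.zero_mul, Matrix.one_mul, zero_add, add_zero, mul_neg_one,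
    Matrix.neg_mul] at h2
  linear_combination (norm := module) h2

lemma cker {g : Matrix (Fin n ⊕ Fin n) (Fin n ⊕ Fin n) ℂ} (hg : g ∈ sp n) :
    ∀ v : Fin n → ℂ, Matrix.vecMul v g.toBlocks₂₁ = 0 →
      Matrix.vecMul v g.toBlocks₂₂ = 0 → v = 0 := by
  intro v h1 h2
  have hdet := det_isUnit hg
  have hginv : g * g⁻¹ = 1 := Matrix.mul_nonsing_inv g hdet
  have hwg : Matrix.vecMul (Sum.elim 0 v) g = 0 := by
    funext j
    show ∑ i, Sum.elim (0 : Fin n → ℂ) v i * g i j = 0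
    rw [Fintype.sum_sum_type]
    have hz : ∀ i : Fin n, Sum.elim (0 : Fin n → ℂ) v (Sum.inl i) * g (Sum.inl i) j = 0 := by
      intro i; simp
    rw [Finset.sum_congr rfl (fun i _ => hz i), Finset.sum_const_zero, zero_add]
    cases j with
    | inl j =>
      have := congrFun h1 j
      simpa [Matrix.vecMul, dotProduct, Matrix.toBlocks₂₁] using this
    | inr j =>
      have := congrFun h2 j
      simpa [Matrix.vecMul, dotProduct, Matrix.toBlocks₂₂] using this
  have hw0 := strip hwg hginv
  funext i
  exact congrFun hw0 (Sum.inr i)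

end

end Stmt14Aux

open Stmt14Aux in
/-- **Theorem 2.5 (1)** for the Hermitian pair `(Sp_{2n}(ℂ), GL_n(ℂ))` with
`Q = K`: the two opposite Siegel parabolic subgroups `P₁` and `P₂` of the
symplectic group intersect in the block diagonal subgroup `K ≅ GL_n(ℂ)` and
their product `P₁P₂` is dense in `Sp_{2n}(ℂ)`. -/
theorem stmt_14 (n : ℕ) (hn : 1 ≤ n)
    (J : Matrix (Fin n ⊕ Fin n) (Fin n ⊕ Fin n) ℂ)
    (hJ : J = Matrix.fromBlocks 0 1 (-1) 0)
    (Sp P₁ P₂ K : Set (Matrix (Fin n ⊕ Fin n) (Fin n ⊕ Fin n) ℂ))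
    (hSp : Sp = {M | M * J * Mᵀ = J})
    (hP₁ : P₁ = {g ∈ Sp | ∀ i j : Fin n, g (Sum.inr i) (Sum.inl j) = 0})
    (hP₂ : P₂ = {g ∈ Sp | ∀ i j : Fin n, g (Sum.inl i) (Sum.inr j) = 0})
    (hK : K = {g ∈ Sp | ∀ i j : Fin n,
      g (Sum.inr i) (Sum.inl j) = 0 ∧ g (Sum.inl i) (Sum.inr j) = 0}) :
    P₁ ∩ P₂ = K ∧
      ∀ g ∈ Sp, g ∈ closure {m | ∃ a ∈ P₁, ∃ b ∈ P₂, m = a * b} := by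
  have hSp' : Sp = sp n := by rw [hSp, hJ]; rfl
  constructor
  · rw [hP₁, hP₂, hK]
    ext g
    constructor
    · rintro ⟨⟨hg, h1⟩, ⟨-, h2⟩⟩
      exact ⟨hg, fun i j => ⟨h1 i j, h2 i j⟩⟩
    · rintro ⟨hg, h⟩
      exact ⟨⟨hg, fun i j => (h i j).1⟩, ⟨hg, fun i j => (h i j).2⟩⟩
  · intro g hg
    have hg' : g ∈ sp n := by rwa [← hSp']
    set A := g.toBlocks₁₁ with hA
    set B := g.toBlocks₁₂ with hB
    set Cm := g.toBlocks₂₁ with hC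
    set Dm := g.toBlocks₂₂ with hDm
    have hgblocks : g = fromBlocks A B Cm Dm := (Matrix.fromBlocks_toBlocks g).symm
    obtain ⟨S, hSsym, hSdet⟩ := exists_sym Cm Dm (csym hg') (cker hg')
    set q : Matrix (Fin n) (Fin n) (Polynomial ℂ) :=
      Matrix.of (fun i j => Polynomial.C (Dm i j) + Polynomial.X * Polynomial.C ((Cm * S) i j))
      with hq
    set pp := q.det with hpp
    have hpeval : ∀ ε : ℂ, pp.eval ε = (Dm + ε • (Cm * S)).det := by
      intro ε
      have hqmap : q.map (Polynomial.evalRingHom ε) = Dm + ε • (Cm * S) := by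
        ext i j
        simp [hq, Matrix.map_apply, Matrix.add_apply, Matrix.smul_apply, smul_eq_mul]
        ring
      have h := RingHom.map_det (Polynomial.evalRingHom ε) q
      rw [RingHom.mapMatrix_apply, hqmap] at h
      simpa [Polynomial.coe_evalRingHom] using h
    have hp1 : pp.eval 1 ≠ 0 := by
      rw [hpeval 1, one_smul]
      exact hSdet.ne_zero
    have hppne : pp ≠ 0 := fun h => hp1 (by rw [h, Polynomial.eval_zero])
    have hfin : {x : ℂ | pp.IsRoot x}.Finite := Polynomial.finite_setOf_isRoot hppne
    have hev : ∀ᶠ ε in nhdsWithin (0:ℂ) {(0:ℂ)}ᶜ, pp.eval ε ≠ 0 := by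
      have hcl : IsClosed ({x : ℂ | pp.IsRoot x} \ {0}) :=
        (hfin.subset Set.diff_subset).isClosed
      have h0 : (0:ℂ) ∉ {x : ℂ | pp.IsRoot x} \ {0} := fun h => h.2 rfl
      have hnb : ({x : ℂ | pp.IsRoot x} \ {0})ᶜ ∈ nhds (0:ℂ) := hcl.isOpen_compl.mem_nhds h0
      filter_upwards [self_mem_nhdsWithin, mem_nhdsWithin_of_mem_nhds hnb] with ε hne hnr h0'
      exact hnr ⟨h0', hne⟩
    set E : Matrix (Fin n ⊕ Fin n) (Fin n ⊕ Fin n) ℂ := Matrix.fromBlocks 0 S 0 0 with hE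
    have hfrom : ∀ ε : ℂ, (Matrix.fromBlocks 1 (ε • S) 0 1 :
        Matrix (Fin n ⊕ Fin n) (Fin n ⊕ Fin n) ℂ) = 1 + ε • E := by
      intro ε
      rw [hE, ← Matrix.fromBlocks_one]
      ext i j
      cases i <;> cases j <;>
        simp [Matrix.fromBlocks, Matrix.add_apply, Matrix.smul_apply]
    have htend : Filter.Tendsto (fun ε : ℂ => g * (1 + ε • E))
        (nhdsWithin (0:ℂ) {(0:ℂ)}ᶜ) (nhds g) := by
      have hcont : Continuous (fun ε : ℂ => g * (1 + ε • E)) := by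
        have heq : (fun ε : ℂ => g * (1 + ε • E)) = fun ε => g + ε • (g * E) := by
          funext ε
          rw [Matrix.mul_add, Matrix.mul_one, Matrix.mul_smul]
        rw [heq]
        exact continuous_const.add (continuous_id.smul continuous_const)
      have h00 : g * (1 + (0:ℂ) • E) = g := by rw [zero_smul, add_zero, Matrix.mul_one]
      exact (h00 ▸ hcont.tendsto 0).mono_left nhdsWithin_le_nhds
    have hmem : ∀ᶠ ε in nhdsWithin (0:ℂ) {(0:ℂ)}ᶜ,
        g * (1 + ε • E) ∈ {m | ∃ a ∈ P₁, ∃ b ∈ P₂, m = a * b} := by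
      filter_upwards [hev] with ε hεne
      have hsmulsym : (ε • S)ᵀ = ε • S := by rw [Matrix.transpose_smul, hSsym]
      have hgu : g * (1 + ε • E) ∈ sp n := by
        rw [← hfrom ε]
        exact mul_mem hg' (tri_mem _ hsmulsym)
      have hblocks : (g * (1 + ε • E)).toBlocks₂₂ = Dm + ε • (Cm * S) := by
        rw [← hfrom ε]
        conv_lhs => rw [hgblocks]
        rw [Matrix.fromBlocks_multiply, Matrix.toBlocks_fromBlocks₂₂]
        rw [Matrix.mul_smul, Matrix.mul_one]
        exact add_comm _ _
      have hdetu : IsUnit ((g * (1 + ε • E)).toBlocks₂₂).det := by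
        rw [hblocks]
        rw [hpeval ε] at hεne
        exact isUnit_iff_ne_zero.mpr hεne
      obtain ⟨a, b, haSp, ha21, hbSp, hb12, hab⟩ := factor hgu hdetu
      refine ⟨a, ?_, b, ?_, hab⟩
      · rw [hP₁]
        exact ⟨by rw [hSp']; exact haSp, ha21⟩
      · rw [hP₂]
        exact ⟨by rw [hSp']; exact hbSp, hb12⟩
    exact mem_closure_of_tendsto htend hmem
end
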